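/- arXiv:1005.4429 — 6 statements merged into one kernel-verified Lean document; each statement's English description precedes it below -/
import Mathlib

section
/- Let F be an invertible element of H ⊗ H satisfying the 2-cocycle condition F₁₂ · ((Δ ⊗ id)(F)) = F₂₃ · ((id ⊗ Δ)(F)). Then the twisted coproduct Δ^F(x) = F · Δ(x) · F⁻¹ is coassociative: for every x ∈ H, applying Δ^F to the first tensor factor of Δ^F(x) agrees (under the canonical associator identification of (H ⊗ H) ⊗ H with H ⊗ (H ⊗ H)) with applying Δ^F to the second tensor factor of Δ^F(x). -/
open TensorProduct

set_option maxHeartbeats 1000000 in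
/-- If an invertible `F ∈ H ⊗ H` satisfies the 2-cocycle condition, then the
twisted coproduct `Δ^F(x) = F · Δ(x) · F⁻¹` is coassociative: applying `Δ^F` to the first
tensor factor of `Δ^F(x)` agrees, under the canonical associator, with applying `Δ^F` to the
second tensor factor. -/
theorem twisted_coproduct_coassociative {R H : Type*} [CommRing R] [Ring H] [Bialgebra R H]
    (F Finv : H ⊗[R] H)
    (hF1 : F * Finv = 1) (hF2 : Finv * F = 1)
    (hcocycle :
      (Algebra.TensorProduct.assoc R R R H H H) (F ⊗ₜ (1 : H)) *
        ((Algebra.TensorProduct.assoc R R R H H H).toAlgHom.comp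
          (Algebra.TensorProduct.map (Bialgebra.comulAlgHom R H) (AlgHom.id R H))) F =
      ((1 : H) ⊗ₜ F) *
        (Algebra.TensorProduct.map (AlgHom.id R H) (Bialgebra.comulAlgHom R H)) F)
    (DeltaF : H →ₗ[R] H ⊗[R] H)
    (hDeltaF : ∀ x : H, DeltaF x = F * Coalgebra.comul x * Finv) :
    ∀ x : H,
      (TensorProduct.assoc R H H H)
          ((TensorProduct.map DeltaF LinearMap.id) (DeltaF x)) =
        (TensorProduct.map LinearMap.id DeltaF) (DeltaF x) := by
  intro x
  set A := Algebra.TensorProduct.assoc R R R H H H with hA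
  set G := Algebra.TensorProduct.map (Bialgebra.comulAlgHom R H) (AlgHom.id R H) with hG
  set K := Algebra.TensorProduct.map (AlgHom.id R H) (Bialgebra.comulAlgHom R H) with hK
  have key1 : ∀ y : H ⊗[R] H,
      (TensorProduct.map DeltaF LinearMap.id) y =
        (F ⊗ₜ (1 : H)) * G y * (Finv ⊗ₜ (1 : H)) := by
    intro y
    induction y using TensorProduct.induction_on with
    | zero => simp
    | tmul a b =>
        simp [hDeltaF, hG, Algebra.TensorProduct.tmul_mul_tmul, Bialgebra.comulAlgHom_apply]
    | add u v hu hv => simp [map_add, hu, hv, mul_add, add_mul]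
  have key2 : ∀ y : H ⊗[R] H,
      (TensorProduct.map LinearMap.id DeltaF) y =
        ((1 : H) ⊗ₜ F) * K y * ((1 : H) ⊗ₜ Finv) := by
    intro y
    induction y using TensorProduct.induction_on with
    | zero => simp
    | tmul a b =>
        simp [hDeltaF, hK, Algebra.TensorProduct.tmul_mul_tmul, Bialgebra.comulAlgHom_apply]
    | add u v hu hv => simp [map_add, hu, hv, mul_add, add_mul]
  have hcoassoc : A (G (Coalgebra.comul x)) = K (Coalgebra.comul x) := by
    have := Coalgebra.coassoc_apply (R := R) (A := H) x
    exact this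
  set Φ : H ⊗[R] (H ⊗[R] H) := A (F ⊗ₜ (1:H)) * A (G F) with hΦ
  have hcoc : Φ = ((1:H) ⊗ₜ F) * K F := hcocycle
  set P : H ⊗[R] (H ⊗[R] H) := A (G Finv) * A (Finv ⊗ₜ (1:H)) with hP
  set Q : H ⊗[R] (H ⊗[R] H) := K Finv * ((1:H) ⊗ₜ Finv) with hQ
  have h1 : ((F : H ⊗[R] H) ⊗ₜ (1:H)) * (Finv ⊗ₜ (1:H)) = (1 : (H ⊗[R] H) ⊗[R] H) := by
    rw [Algebra.TensorProduct.tmul_mul_tmul, hF1, mul_one]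
    rfl
  have h3 : (((1:H) ⊗ₜ F : H ⊗[R] (H ⊗[R] H))) * ((1:H) ⊗ₜ Finv) = 1 := by
    rw [Algebra.TensorProduct.tmul_mul_tmul, hF1, one_mul]
    rfl
  have hΦP : Φ * P = 1 := by
    rw [hΦ, hP]
    calc A (F ⊗ₜ (1:H)) * A (G F) * (A (G Finv) * A (Finv ⊗ₜ (1:H)))
        = A ((F ⊗ₜ (1:H)) * (G F * G Finv) * (Finv ⊗ₜ (1:H))) := by
          simp [map_mul, mul_assoc]
      _ = 1 := by rw [← map_mul G, hF1, map_one, mul_one, h1, map_one]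
  have h4 : (((1:H) ⊗ₜ Finv : H ⊗[R] (H ⊗[R] H))) * ((1:H) ⊗ₜ F) = 1 := by
    rw [Algebra.TensorProduct.tmul_mul_tmul, hF2, one_mul]
    rfl
  have hQΦ : Q * Φ = 1 := by
    rw [hQ, hcoc]
    calc K Finv * ((1:H) ⊗ₜ Finv) * (((1:H) ⊗ₜ F) * K F)
        = K Finv * ((((1:H) ⊗ₜ Finv) * ((1:H) ⊗ₜ F)) * K F) := by
          simp only [mul_assoc]
      _ = 1 := by rw [h4, one_mul, ← map_mul K, hF2, map_one]
  have hPQ : P = Q := by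
    calc P = 1 * P := (one_mul P).symm
      _ = Q * (Φ * P) := by rw [← hQΦ, mul_assoc]
      _ = Q := by rw [hΦP, mul_one]
  calc (TensorProduct.assoc R H H H) ((TensorProduct.map DeltaF LinearMap.id) (DeltaF x))
      = A ((F ⊗ₜ (1:H)) * (G F * G (Coalgebra.comul x) * G Finv) * (Finv ⊗ₜ (1:H))) := by
        rw [key1, hDeltaF, map_mul G, map_mul G]
        rfl
    _ = Φ * (A (G (Coalgebra.comul x)) * P) := by
        rw [hΦ, hP]
        simp only [map_mul, mul_assoc]
    _ = Φ * (K (Coalgebra.comul x) * Q) := by rw [hcoassoc, hPQ]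
    _ = ((1:H) ⊗ₜ F) * (K F * K (Coalgebra.comul x) * K Finv) * ((1:H) ⊗ₜ Finv) := by
        rw [hcoc, hQ]
        simp only [mul_assoc]
    _ = (TensorProduct.map LinearMap.id DeltaF) (DeltaF x) := by
        rw [key2, hDeltaF]
        simp only [map_mul, mul_assoc]
end

section
/- Let H be a Hopf algebra with antipode S and let F ∈ H ⊗ H be an invertible element satisfying the 2-cocycle and normalization conditions. Write F = Σ fᵅ ⊗ f_α and F⁻¹ = Σ f̄ᵅ ⊗ f̄_α, and define the Drinfeld element u := Σ fᵅ · S(f_α) (that is, u = m((id ⊗ S)(F)), where m is the multiplication of H) and v := Σ S(f̄ᵅ) · f̄_α = m((S ⊗ id)(F⁻¹)). Then u · v = 1 = v · u; in particular u is invertible with u⁻¹ = v. -/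
set_option maxHeartbeats 1000000
set_option synthInstance.maxHeartbeats 200000
open TensorProduct
noncomputable section
namespace DrinAux
variable {R H : Type*} [CommRing R] [Ring H] [HopfAlgebra R H]
open Coalgebra HopfAlgebra LinearMap

def DT : H ⊗[R] H →ₗ[R] (H ⊗[R] H) ⊗[R] (H ⊗[R] H) :=
  (TensorProduct.tensorTensorTensorComm R H H H H).toLinearMap ∘ₗ
    TensorProduct.map Coalgebra.comul Coalgebra.comul

def ET : H ⊗[R] H →ₗ[R] H :=
  Algebra.linearMap R H ∘ₗ LinearMap.mul' R R ∘ₗ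
    TensorProduct.map Coalgebra.counit Coalgebra.counit

def conv (φ ψ : H ⊗[R] H →ₗ[R] H) : H ⊗[R] H →ₗ[R] H :=
  LinearMap.mul' R H ∘ₗ TensorProduct.map φ ψ ∘ₗ DT

lemma DT_tmul (a b : H) :
    DT (R := R) (a ⊗ₜ b) =
      (TensorProduct.tensorTensorTensorComm R H H H H)
        (Coalgebra.comul a ⊗ₜ Coalgebra.comul b) := by
  simp [DT]

lemma ET_tmul (a b : H) :
    ET (R := R) (a ⊗ₜ b) =
      algebraMap R H (Coalgebra.counit a * Coalgebra.counit b) := by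
  simp [ET]

lemma conv_tmul (φ ψ : H ⊗[R] H →ₗ[R] H) (a b : H) :
    conv φ ψ (a ⊗ₜ b) =
      (LinearMap.mul' R H ∘ₗ TensorProduct.map φ ψ ∘ₗ
        (TensorProduct.tensorTensorTensorComm R H H H H).toLinearMap)
        (Coalgebra.comul a ⊗ₜ Coalgebra.comul b) := by
  simp [conv, DT]

/-- `κL (x ⊗ y) = ε x • y` -/
def κL : H ⊗[R] H →ₗ[R] H :=
  (TensorProduct.lid R H).toLinearMap ∘ₗ (Coalgebra.counit (R := R)).rTensor H

/-- `κR (x ⊗ y) = ε y • x` -/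
def κR : H ⊗[R] H →ₗ[R] H :=
  (TensorProduct.rid R H).toLinearMap ∘ₗ (Coalgebra.counit (R := R)).lTensor H

@[simp] lemma κL_tmul (x y : H) : κL (R := R) (x ⊗ₜ y) = (Coalgebra.counit (R := R) x) • y := by
  simp [κL]

@[simp] lemma κR_tmul (x y : H) : κR (R := R) (x ⊗ₜ y) = (Coalgebra.counit (R := R) y) • x := by
  simp [κR]

@[simp] lemma κL_comul (a : H) : κL (R := R) (Coalgebra.comul a) = a := by
  simp [κL]

@[simp] lemma κR_comul (a : H) : κR (R := R) (Coalgebra.comul a) = a := by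
  simp [κR]

lemma conv_ET_left (φ : H ⊗[R] H →ₗ[R] H) : conv ET φ = φ := by
  apply TensorProduct.ext'
  intro a b
  rw [conv_tmul]
  have hmap : (LinearMap.mul' R H ∘ₗ TensorProduct.map ET φ ∘ₗ
      (TensorProduct.tensorTensorTensorComm R H H H H).toLinearMap)
      = φ ∘ₗ TensorProduct.map κL κL := by
    apply TensorProduct.ext_fourfold'
    intro w x y z
    have h2 : (κL (R := R) (w ⊗ₜ x)) ⊗ₜ[R] (κL (R := R) (y ⊗ₜ z))
        = (Coalgebra.counit (R := R) w * Coalgebra.counit (R := R) y) • (x ⊗ₜ[R] z) := by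
      simp [smul_tmul', tmul_smul, smul_smul, mul_comm]
    simp only [LinearMap.coe_comp, LinearEquiv.coe_coe, Function.comp_apply,
      tensorTensorTensorComm_tmul, TensorProduct.map_tmul, LinearMap.mul'_apply, ET_tmul, h2,
      map_smul]
    rw [Algebra.smul_def]
  rw [hmap]
  simp

lemma conv_ET_right (φ : H ⊗[R] H →ₗ[R] H) : conv φ ET = φ := by
  apply TensorProduct.ext'
  intro a b
  rw [conv_tmul]
  have hmap : (LinearMap.mul' R H ∘ₗ TensorProduct.map φ ET ∘ₗ
      (TensorProduct.tensorTensorTensorComm R H H H H).toLinearMap)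
      = φ ∘ₗ TensorProduct.map κR κR := by
    apply TensorProduct.ext_fourfold'
    intro w x y z
    have h2 : (κR (R := R) (w ⊗ₜ x)) ⊗ₜ[R] (κR (R := R) (y ⊗ₜ z))
        = (Coalgebra.counit (R := R) x * Coalgebra.counit (R := R) z) • (w ⊗ₜ[R] y) := by
      simp [smul_tmul', tmul_smul, smul_smul, mul_comm]
    simp only [LinearMap.coe_comp, LinearEquiv.coe_coe, Function.comp_apply,
      tensorTensorTensorComm_tmul, TensorProduct.map_tmul, LinearMap.mul'_apply, ET_tmul, h2,
      map_smul]
    rw [Algebra.smul_def, Algebra.commutes]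
  rw [hmap]
  simp

end DrinAux

namespace DrinAux
variable {R H : Type*} [CommRing R] [Ring H] [HopfAlgebra R H]
open Coalgebra HopfAlgebra LinearMap

/-- `fS (x ⊗ y) = S (x * y)` -/
def fS : H ⊗[R] H →ₗ[R] H := HopfAlgebra.antipode R ∘ₗ LinearMap.mul' R H

/-- `gS (x ⊗ y) = S y * S x` -/
def gS : H ⊗[R] H →ₗ[R] H :=
  LinearMap.mul' R H ∘ₗ TensorProduct.map (HopfAlgebra.antipode R) (HopfAlgebra.antipode R) ∘ₗ
    (TensorProduct.comm R H H).toLinearMap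

@[simp] lemma fS_tmul (x y : H) :
    fS (R := R) (x ⊗ₜ y) = HopfAlgebra.antipode (R := R) (x * y) := by simp [fS]

@[simp] lemma gS_tmul (x y : H) :
    gS (R := R) (x ⊗ₜ y) =
      HopfAlgebra.antipode (R := R) y * HopfAlgebra.antipode (R := R) x := by simp [gS]

lemma conv_M_fS : conv (LinearMap.mul' R H) (fS (R := R) (H := H)) = ET := by
  apply TensorProduct.ext'
  intro a b
  rw [conv_tmul, ET_tmul]
  have hmap : (LinearMap.mul' R H ∘ₗ TensorProduct.map (LinearMap.mul' R H) fS ∘ₗ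
      (TensorProduct.tensorTensorTensorComm R H H H H).toLinearMap)
      = (LinearMap.mul' R H ∘ₗ (HopfAlgebra.antipode (R := R)).lTensor H) ∘ₗ
        LinearMap.mul' R (H ⊗[R] H) := by
    apply TensorProduct.ext_fourfold'
    intro w x y z
    simp [Algebra.TensorProduct.tmul_mul_tmul]
  rw [hmap]
  simp only [LinearMap.coe_comp, Function.comp_apply, LinearMap.mul'_apply]
  rw [← Bialgebra.comul_mul, HopfAlgebra.mul_antipode_lTensor_comul_apply,
    Bialgebra.counit_mul]

lemma conv_gS_M : conv (gS (R := R) (H := H)) (LinearMap.mul' R H) = ET := by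
  apply TensorProduct.ext'
  intro a b
  rw [conv_tmul, ET_tmul]
  have ra := Coalgebra.Repr.arbitrary R a
  have rb := Coalgebra.Repr.arbitrary R b
  rw [← ra.eq, ← rb.eq, TensorProduct.sum_tmul]
  rw [map_sum]
  have step1 : ∀ i ∈ ra.index,
      (LinearMap.mul' R H ∘ₗ TensorProduct.map gS (LinearMap.mul' R H) ∘ₗ
        (TensorProduct.tensorTensorTensorComm R H H H H).toLinearMap)
        ((ra.left i ⊗ₜ[R] ra.right i) ⊗ₜ (∑ j ∈ rb.index, rb.left j ⊗ₜ[R] rb.right j))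
      = ∑ j ∈ rb.index,
          HopfAlgebra.antipode (R := R) (rb.left j) *
            ((HopfAlgebra.antipode (R := R) (ra.left i) * ra.right i) * rb.right j) := by
    intro i _
    rw [TensorProduct.tmul_sum, map_sum]
    refine Finset.sum_congr rfl fun j _ => ?_
    simp [mul_assoc]
  rw [Finset.sum_congr rfl step1, Finset.sum_comm]
  have step2 : ∀ j ∈ rb.index,
      (∑ i ∈ ra.index, HopfAlgebra.antipode (R := R) (rb.left j) *
        ((HopfAlgebra.antipode (R := R) (ra.left i) * ra.right i) * rb.right j))
      = Coalgebra.counit (R := R) a •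
          (HopfAlgebra.antipode (R := R) (rb.left j) * rb.right j) := by
    intro j _
    rw [← Finset.mul_sum, ← Finset.sum_mul, HopfAlgebra.sum_antipode_mul_eq_algebraMap_counit ra]
    rw [← Algebra.smul_def, mul_smul_comm]
  rw [Finset.sum_congr rfl step2, ← Finset.smul_sum, HopfAlgebra.sum_antipode_mul_eq_algebraMap_counit rb,
    Algebra.smul_def, ← map_mul]

end DrinAux

namespace DrinAux
variable {R H : Type*} [CommRing R] [Ring H] [HopfAlgebra R H]
open Coalgebra HopfAlgebra LinearMap

/-- interleaving equivalence -/
def ι : ((H ⊗[R] (H ⊗[R] H)) ⊗[R] (H ⊗[R] (H ⊗[R] H))) ≃ₗ[R]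
    ((H ⊗[R] H) ⊗[R] ((H ⊗[R] H) ⊗[R] (H ⊗[R] H))) :=
  (TensorProduct.tensorTensorTensorComm R H (H ⊗[R] H) H (H ⊗[R] H)).trans
    (TensorProduct.congr (LinearEquiv.refl R (H ⊗[R] H))
      (TensorProduct.tensorTensorTensorComm R H H H H))

@[simp] lemma ι_tmul (x y p₁ p₂ q₁ q₂ : H) :
    ι (R := R) ((x ⊗ₜ (p₁ ⊗ₜ p₂)) ⊗ₜ (y ⊗ₜ (q₁ ⊗ₜ q₂)))
      = (x ⊗ₜ y) ⊗ₜ ((p₁ ⊗ₜ q₁) ⊗ₜ (p₂ ⊗ₜ q₂)) := by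
  simp [ι]

lemma star1 (x y : H) (P Q : H ⊗[R] H) :
    (x ⊗ₜ[R] y) ⊗ₜ[R] (TensorProduct.tensorTensorTensorComm R H H H H (P ⊗ₜ Q))
      = ι ((x ⊗ₜ P) ⊗ₜ (y ⊗ₜ Q)) := by
  induction P using TensorProduct.induction_on with
  | zero => simp
  | add P₁ P₂ h1 h2 => simp [add_tmul, tmul_add, h1, h2]
  | tmul p₁ p₂ =>
    induction Q using TensorProduct.induction_on with
    | zero => simp
    | add Q₁ Q₂ h1 h2 => simp [add_tmul, tmul_add, h1, h2]
    | tmul q₁ q₂ => simp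

lemma star2 (x y : H) (P Q : H ⊗[R] H) :
    (TensorProduct.assoc R (H ⊗[R] H) (H ⊗[R] H) (H ⊗[R] H))
        ((TensorProduct.tensorTensorTensorComm R H H H H (P ⊗ₜ Q)) ⊗ₜ[R] (x ⊗ₜ[R] y))
      = ι (((TensorProduct.assoc R H H H) (P ⊗ₜ x)) ⊗ₜ ((TensorProduct.assoc R H H H) (Q ⊗ₜ y))) := by
  induction P using TensorProduct.induction_on with
  | zero => simp
  | add P₁ P₂ h1 h2 => simp [add_tmul, tmul_add, h1, h2]
  | tmul p₁ p₂ =>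
    induction Q using TensorProduct.induction_on with
    | zero => simp
    | add Q₁ Q₂ h1 h2 => simp [add_tmul, tmul_add, h1, h2]
    | tmul q₁ q₂ => simp

lemma M2eq :
    (DT (R := R) (H := H)).lTensor (H ⊗[R] H) ∘ₗ
        (TensorProduct.tensorTensorTensorComm R H H H H).toLinearMap
      = ι.toLinearMap ∘ₗ
        TensorProduct.map ((Coalgebra.comul (R := R)).lTensor H)
          ((Coalgebra.comul (R := R)).lTensor H) := by
  apply TensorProduct.ext_fourfold'
  intro x₁ x₂ y₁ y₂
  simp only [LinearMap.coe_comp, LinearEquiv.coe_coe, Function.comp_apply,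
    tensorTensorTensorComm_tmul, TensorProduct.map_tmul, LinearMap.lTensor_tmul, DT_tmul]
  exact star1 x₁ y₁ (Coalgebra.comul x₂) (Coalgebra.comul y₂)

lemma M1eq :
    (TensorProduct.assoc R (H ⊗[R] H) (H ⊗[R] H) (H ⊗[R] H)).toLinearMap ∘ₗ
        (DT (R := R) (H := H)).rTensor (H ⊗[R] H) ∘ₗ
        (TensorProduct.tensorTensorTensorComm R H H H H).toLinearMap
      = ι.toLinearMap ∘ₗ
        TensorProduct.map
          ((TensorProduct.assoc R H H H).toLinearMap ∘ₗ (Coalgebra.comul (R := R)).rTensor H)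
          ((TensorProduct.assoc R H H H).toLinearMap ∘ₗ (Coalgebra.comul (R := R)).rTensor H) := by
  apply TensorProduct.ext_fourfold'
  intro x₁ x₂ y₁ y₂
  simp only [LinearMap.coe_comp, LinearEquiv.coe_coe, Function.comp_apply,
    tensorTensorTensorComm_tmul, TensorProduct.map_tmul, LinearMap.rTensor_tmul, DT_tmul]
  exact star2 x₂ y₂ (Coalgebra.comul x₁) (Coalgebra.comul y₁)

lemma coassoc_T :
    (TensorProduct.assoc R (H ⊗[R] H) (H ⊗[R] H) (H ⊗[R] H)).toLinearMap ∘ₗ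
        (DT (R := R) (H := H)).rTensor (H ⊗[R] H) ∘ₗ DT
      = (DT (R := R) (H := H)).lTensor (H ⊗[R] H) ∘ₗ DT := by
  apply TensorProduct.ext'
  intro a b
  have l1 := DFunLike.congr_fun (M1eq (R := R) (H := H))
    (Coalgebra.comul a ⊗ₜ Coalgebra.comul b)
  have l2 := DFunLike.congr_fun (M2eq (R := R) (H := H))
    (Coalgebra.comul a ⊗ₜ Coalgebra.comul b)
  simp only [LinearMap.coe_comp, LinearEquiv.coe_coe, Function.comp_apply,
    TensorProduct.map_tmul] at l1 l2 ⊢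
  rw [DT_tmul, l1, l2, Coalgebra.coassoc_apply a, Coalgebra.coassoc_apply b]

end DrinAux

namespace DrinAux
variable {R H : Type*} [CommRing R] [Ring H] [HopfAlgebra R H]
open Coalgebra HopfAlgebra LinearMap

lemma natlemma (φ ψ χ : H ⊗[R] H →ₗ[R] H) :
    TensorProduct.map (TensorProduct.map φ ψ) χ ∘ₗ
        (TensorProduct.assoc R (H ⊗[R] H) (H ⊗[R] H) (H ⊗[R] H)).symm.toLinearMap
      = (TensorProduct.assoc R H H H).symm.toLinearMap ∘ₗ
        TensorProduct.map φ (TensorProduct.map ψ χ) := by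
  apply TensorProduct.ext'
  intro x w
  induction w using TensorProduct.induction_on with
  | zero => simp
  | add w₁ w₂ h1 h2 => simp only [tmul_add, map_add] at h1 h2 ⊢; rw [h1, h2]
  | tmul y z => simp

lemma mul3 :
    LinearMap.mul' R H ∘ₗ TensorProduct.map (LinearMap.mul' R H) LinearMap.id ∘ₗ
        (TensorProduct.assoc R H H H).symm.toLinearMap
      = LinearMap.mul' R H ∘ₗ TensorProduct.map LinearMap.id (LinearMap.mul' R H) := by
  apply TensorProduct.ext'
  intro x w
  induction w using TensorProduct.induction_on with
  | zero => simp
  | add w₁ w₂ h1 h2 => simp only [tmul_add, map_add] at h1 h2 ⊢; rw [h1, h2]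
  | tmul y z => simp [mul_assoc]

lemma conv_assoc (φ ψ χ : H ⊗[R] H →ₗ[R] H) :
    conv (conv φ ψ) χ = conv φ (conv ψ χ) := by
  have e1 : TensorProduct.map (conv φ ψ) χ
      = TensorProduct.map (LinearMap.mul' R H) LinearMap.id ∘ₗ
          TensorProduct.map (TensorProduct.map φ ψ) χ ∘ₗ
          TensorProduct.map DT LinearMap.id := by
    rw [← TensorProduct.map_comp, ← TensorProduct.map_comp]
    simp [conv, LinearMap.comp_assoc]
  have e2 : TensorProduct.map φ (conv ψ χ)
      = TensorProduct.map LinearMap.id (LinearMap.mul' R H) ∘ₗ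
          TensorProduct.map φ (TensorProduct.map ψ χ) ∘ₗ
          TensorProduct.map LinearMap.id DT := by
    rw [← TensorProduct.map_comp, ← TensorProduct.map_comp]
    simp [conv, LinearMap.comp_assoc]
  apply LinearMap.ext
  intro t
  have hco := DFunLike.congr_fun (coassoc_T (R := R) (H := H)) t
  simp only [LinearMap.coe_comp, LinearEquiv.coe_coe, Function.comp_apply] at hco
  have hco' : (TensorProduct.map DT LinearMap.id) (DT t)
      = (TensorProduct.assoc R (H ⊗[R] H) (H ⊗[R] H) (H ⊗[R] H)).symm
          ((TensorProduct.map LinearMap.id DT) (DT t)) := by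
    have h1 : (TensorProduct.map DT LinearMap.id) (DT t) = (DT.rTensor (H ⊗[R] H)) (DT t) := rfl
    have h2 : (TensorProduct.map LinearMap.id DT) (DT t) = (DT.lTensor (H ⊗[R] H)) (DT t) := rfl
    rw [h1, h2, ← hco, LinearEquiv.symm_apply_apply]
  have hnat := DFunLike.congr_fun (natlemma (R := R) (H := H) φ ψ χ)
    ((TensorProduct.map LinearMap.id DT) (DT t))
  have hmul := DFunLike.congr_fun (mul3 (R := R) (H := H))
    ((TensorProduct.map φ (TensorProduct.map ψ χ)) ((TensorProduct.map LinearMap.id DT) (DT t)))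
  simp only [LinearMap.coe_comp, LinearEquiv.coe_coe, Function.comp_apply] at hnat hmul
  show (LinearMap.mul' R H) ((TensorProduct.map (conv φ ψ) χ) (DT t))
      = (LinearMap.mul' R H) ((TensorProduct.map φ (conv ψ χ)) (DT t))
  rw [e1, e2]
  simp only [LinearMap.coe_comp, Function.comp_apply]
  rw [hco', hnat, hmul]

lemma antipode_one' : HopfAlgebra.antipode (R := R) (1 : H) = 1 := by
  have h := HopfAlgebra.mul_antipode_rTensor_comul_apply (R := R) (A := H) 1
  rw [Bialgebra.comul_one, Algebra.TensorProduct.one_def] at h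
  simpa using h

lemma antipode_mul' (a b : H) :
    HopfAlgebra.antipode (R := R) (a * b)
      = HopfAlgebra.antipode (R := R) b * HopfAlgebra.antipode (R := R) a := by
  have key : gS (R := R) (H := H) = fS := by
    calc gS (R := R) (H := H) = conv gS ET := (conv_ET_right gS).symm
      _ = conv gS (conv (LinearMap.mul' R H) fS) := by rw [conv_M_fS]
      _ = conv (conv gS (LinearMap.mul' R H)) fS := (conv_assoc _ _ _).symm
      _ = conv ET fS := by rw [conv_gS_M]
      _ = fS := conv_ET_left fS
  have := DFunLike.congr_fun key (a ⊗ₜ[R] b)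
  simpa using this.symm

end DrinAux

namespace DrinAux
variable {R H : Type*} [CommRing R] [Ring H] [HopfAlgebra R H]
open Coalgebra HopfAlgebra LinearMap

/-- `χm (x ⊗ (y ⊗ z)) = x * (S y * z)` -/
def χm : H ⊗[R] (H ⊗[R] H) →ₗ[R] H :=
  LinearMap.mul' R H ∘ₗ TensorProduct.map LinearMap.id
    (LinearMap.mul' R H ∘ₗ TensorProduct.map (HopfAlgebra.antipode (R := R)) LinearMap.id)

/-- `ψm (x ⊗ (y ⊗ z)) = S x * (y * S z)` -/
def ψm : H ⊗[R] (H ⊗[R] H) →ₗ[R] H :=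
  LinearMap.mul' R H ∘ₗ TensorProduct.map (HopfAlgebra.antipode (R := R))
    (LinearMap.mul' R H ∘ₗ TensorProduct.map LinearMap.id (HopfAlgebra.antipode (R := R)))

@[simp] lemma χm_tmul (x y z : H) :
    χm (R := R) (x ⊗ₜ (y ⊗ₜ z)) = x * (HopfAlgebra.antipode (R := R) y * z) := by
  simp [χm]

@[simp] lemma ψm_tmul (x y z : H) :
    ψm (R := R) (x ⊗ₜ (y ⊗ₜ z))
      = HopfAlgebra.antipode (R := R) x * (y * HopfAlgebra.antipode (R := R) z) := by
  simp [ψm]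

lemma chiL (a d : H) (P Q : H ⊗[R] H) :
    χm (R := R) ((a ⊗ₜ P) * ((Algebra.TensorProduct.assoc R R R H H H) (Q ⊗ₜ d)))
      = a * (LinearMap.mul' R H
            ((TensorProduct.map LinearMap.id (HopfAlgebra.antipode (R := R))) Q)) *
          (LinearMap.mul' R H
            ((TensorProduct.map (HopfAlgebra.antipode (R := R)) LinearMap.id) P)) * d := by
  induction P using TensorProduct.induction_on with
  | zero => simp
  | add P₁ P₂ h1 h2 => simp only [map_add, tmul_add, add_tmul, add_mul, mul_add, h1, h2]
  | tmul p₁ p₂ =>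
    induction Q using TensorProduct.induction_on with
    | zero => simp
    | add Q₁ Q₂ h1 h2 => simp only [map_add, tmul_add, add_tmul, add_mul, mul_add, h1, h2]
    | tmul q₁ q₂ =>
      rw [Algebra.TensorProduct.assoc_tmul, Algebra.TensorProduct.tmul_mul_tmul,
        Algebra.TensorProduct.tmul_mul_tmul, χm_tmul]
      simp only [TensorProduct.map_tmul, LinearMap.mul'_apply, LinearMap.id_coe, id_eq]
      rw [antipode_mul']
      simp only [mul_assoc]

lemma psiL (a d : H) (P Q : H ⊗[R] H) :
    ψm (R := R) (((Algebra.TensorProduct.assoc R R R H H H) (P ⊗ₜ d)) * (a ⊗ₜ Q))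
      = HopfAlgebra.antipode (R := R) a *
          (LinearMap.mul' R H
            ((TensorProduct.map (HopfAlgebra.antipode (R := R)) LinearMap.id) P)) *
          (LinearMap.mul' R H
            ((TensorProduct.map LinearMap.id (HopfAlgebra.antipode (R := R))) Q)) *
          HopfAlgebra.antipode (R := R) d := by
  induction P using TensorProduct.induction_on with
  | zero => simp
  | add P₁ P₂ h1 h2 => simp only [map_add, tmul_add, add_tmul, add_mul, mul_add, h1, h2]
  | tmul p₁ p₂ =>
    induction Q using TensorProduct.induction_on with
    | zero => simp
    | add Q₁ Q₂ h1 h2 => simp only [map_add, tmul_add, add_tmul, add_mul, mul_add, h1, h2]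
    | tmul q₁ q₂ =>
      rw [Algebra.TensorProduct.assoc_tmul, Algebra.TensorProduct.tmul_mul_tmul,
        Algebra.TensorProduct.tmul_mul_tmul, ψm_tmul]
      simp only [TensorProduct.map_tmul, LinearMap.mul'_apply, LinearMap.id_coe, id_eq]
      rw [antipode_mul', antipode_mul']
      simp only [mul_assoc]

lemma smul_helper (r : R) (x y : H) : x * algebraMap R H r * y = r • (x * y) := by
  rw [mul_assoc, ← Algebra.smul_def, mul_smul_comm]

lemma chiC (X Y : H ⊗[R] H) :
    χm (R := R) (((TensorProduct.map LinearMap.id (Coalgebra.comul (R := R))) X) *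
        ((Algebra.TensorProduct.assoc R R R H H H)
          ((TensorProduct.map (Coalgebra.comul (R := R)) LinearMap.id) Y)))
      = (TensorProduct.rid R H)
          ((TensorProduct.map LinearMap.id (Coalgebra.counit (R := R))) X) *
        (TensorProduct.lid R H)
          ((TensorProduct.map (Coalgebra.counit (R := R)) LinearMap.id) Y) := by
  induction X using TensorProduct.induction_on with
  | zero => simp
  | add X₁ X₂ h1 h2 => simp only [map_add, add_mul, mul_add, h1, h2]
  | tmul x₁ x₂ =>
    induction Y using TensorProduct.induction_on with
    | zero => simp
    | add Y₁ Y₂ h1 h2 => simp only [map_add, add_mul, mul_add, h1, h2]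
    | tmul y₁ y₂ =>
      simp only [TensorProduct.map_tmul, LinearMap.id_coe, id_eq]
      rw [chiL]
      have e1 : LinearMap.mul' R H
          ((TensorProduct.map LinearMap.id (HopfAlgebra.antipode (R := R)))
            (Coalgebra.comul y₁)) = algebraMap R H (Coalgebra.counit y₁) :=
        HopfAlgebra.mul_antipode_lTensor_comul_apply y₁
      have e2 : LinearMap.mul' R H
          ((TensorProduct.map (HopfAlgebra.antipode (R := R)) LinearMap.id)
            (Coalgebra.comul x₂)) = algebraMap R H (Coalgebra.counit x₂) :=
        HopfAlgebra.mul_antipode_rTensor_comul_apply x₂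
      rw [e1, e2, smul_helper, smul_helper]
      simp [TensorProduct.rid_tmul, TensorProduct.lid_tmul, smul_mul_assoc, mul_smul_comm,
        smul_smul, mul_comm]

lemma psiC (X Y : H ⊗[R] H) :
    ψm (R := R) (((Algebra.TensorProduct.assoc R R R H H H)
          ((TensorProduct.map (Coalgebra.comul (R := R)) LinearMap.id) Y)) *
        ((TensorProduct.map LinearMap.id (Coalgebra.comul (R := R))) X))
      = HopfAlgebra.antipode (R := R) ((TensorProduct.rid R H)
          ((TensorProduct.map LinearMap.id (Coalgebra.counit (R := R))) X)) *
        HopfAlgebra.antipode (R := R) ((TensorProduct.lid R H)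
          ((TensorProduct.map (Coalgebra.counit (R := R)) LinearMap.id) Y)) := by
  induction X using TensorProduct.induction_on with
  | zero => simp
  | add X₁ X₂ h1 h2 => simp only [map_add, add_mul, mul_add, h1, h2]
  | tmul x₁ x₂ =>
    induction Y using TensorProduct.induction_on with
    | zero => simp
    | add Y₁ Y₂ h1 h2 => simp only [map_add, add_mul, mul_add, h1, h2]
    | tmul y₁ y₂ =>
      simp only [TensorProduct.map_tmul, LinearMap.id_coe, id_eq]
      rw [psiL]
      have e1 : LinearMap.mul' R H
          ((TensorProduct.map (HopfAlgebra.antipode (R := R)) LinearMap.id)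
            (Coalgebra.comul y₁)) = algebraMap R H (Coalgebra.counit y₁) :=
        HopfAlgebra.mul_antipode_rTensor_comul_apply y₁
      have e2 : LinearMap.mul' R H
          ((TensorProduct.map LinearMap.id (HopfAlgebra.antipode (R := R)))
            (Coalgebra.comul x₂)) = algebraMap R H (Coalgebra.counit x₂) :=
        HopfAlgebra.mul_antipode_lTensor_comul_apply x₂
      rw [e1, e2, smul_helper, smul_helper]
      simp [TensorProduct.rid_tmul, TensorProduct.lid_tmul, smul_mul_assoc, mul_smul_comm,
        smul_smul, mul_comm, map_smul]

end DrinAux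

/-- Let `H` be a Hopf algebra with antipode `S` and `F ∈ H ⊗ H` an invertible
element satisfying the 2-cocycle and normalization conditions. Then the Drinfeld element
`u = m((id ⊗ S)(F))` and `v = m((S ⊗ id)(F⁻¹))` satisfy `u·v = 1 = v·u`; in particular `u` is
invertible with `u⁻¹ = v`. -/
theorem drinfeld_element_invertible {R H : Type*} [CommRing R] [Ring H] [HopfAlgebra R H]
    (F Finv : H ⊗[R] H)
    (hF1 : F * Finv = 1) (hF2 : Finv * F = 1)
    (hcocycle :
      (Algebra.TensorProduct.assoc R R R H H H) (F ⊗ₜ (1 : H)) *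
        ((Algebra.TensorProduct.assoc R R R H H H).toAlgHom.comp
          (Algebra.TensorProduct.map (Bialgebra.comulAlgHom R H) (AlgHom.id R H))) F =
      ((1 : H) ⊗ₜ F) *
        (Algebra.TensorProduct.map (AlgHom.id R H) (Bialgebra.comulAlgHom R H)) F)
    (hnorm1 : (TensorProduct.lid R H)
        ((TensorProduct.map (Coalgebra.counit (R := R)) LinearMap.id) F) = 1)
    (hnorm2 : (TensorProduct.rid R H)
        ((TensorProduct.map LinearMap.id (Coalgebra.counit (R := R))) F) = 1)
    (u v : H)
    (hu : u = LinearMap.mul' R H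
      ((TensorProduct.map LinearMap.id (HopfAlgebra.antipode (R := R))) F))
    (hv : v = LinearMap.mul' R H
      ((TensorProduct.map (HopfAlgebra.antipode (R := R)) LinearMap.id) Finv)) :
    u * v = 1 ∧ v * u = 1 := by
  set e := Algebra.TensorProduct.assoc R R R H H H with he
  set CΦ := (Algebra.TensorProduct.assoc R R R H H H).toAlgHom.comp
      (Algebra.TensorProduct.map (Bialgebra.comulAlgHom R H) (AlgHom.id R H)) with hCΦ
  set CΨ := Algebra.TensorProduct.map (AlgHom.id R H) (Bialgebra.comulAlgHom R H) with hCΨ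
  -- bridges between algebra-level and linear-level maps
  have bΦ : ∀ Z : H ⊗[R] H, CΦ Z =
      e ((TensorProduct.map (Coalgebra.comul (R := R)) LinearMap.id) Z) := by
    intro Z
    induction Z using TensorProduct.induction_on with
    | zero => simp
    | add A B h1 h2 => simp only [map_add, h1, h2]
    | tmul x y => simp [hCΦ, he]
  have bΨ : ∀ Z : H ⊗[R] H, CΨ Z =
      (TensorProduct.map LinearMap.id (Coalgebra.comul (R := R))) Z := by
    intro Z
    induction Z using TensorProduct.induction_on with
    | zero => simp
    | add A B h1 h2 => simp only [map_add, h1, h2]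
    | tmul x y => simp [hCΨ]
  -- normalization for the inverse twist
  have hεFinv : (TensorProduct.lid R H)
      ((TensorProduct.map (Coalgebra.counit (R := R)) LinearMap.id) Finv) = 1 := by
    set Elid := (Algebra.TensorProduct.lid R H).toAlgHom.comp
        (Algebra.TensorProduct.map (Bialgebra.counitAlgHom R H) (AlgHom.id R H)) with hElid
    have bE : ∀ Z : H ⊗[R] H, Elid Z = (TensorProduct.lid R H)
        ((TensorProduct.map (Coalgebra.counit (R := R)) LinearMap.id) Z) := by
      intro Z
      induction Z using TensorProduct.induction_on with
      | zero => simp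
      | add A B h1 h2 => simp only [map_add, h1, h2]
      | tmul x y => simp [hElid]
    have h := congrArg Elid hF2
    rw [map_mul, map_one, bE, bE, hnorm1, mul_one] at h
    exact h
  have hεFinv' : (TensorProduct.rid R H)
      ((TensorProduct.map LinearMap.id (Coalgebra.counit (R := R))) Finv) = 1 := by
    set Erid := (Algebra.TensorProduct.rid R R H).toAlgHom.comp
        (Algebra.TensorProduct.map (AlgHom.id R H) (Bialgebra.counitAlgHom R H)) with hErid
    have bE : ∀ Z : H ⊗[R] H, Erid Z = (TensorProduct.rid R H)
        ((TensorProduct.map LinearMap.id (Coalgebra.counit (R := R))) Z) := by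
      intro Z
      induction Z using TensorProduct.induction_on with
      | zero => simp
      | add A B h1 h2 => simp only [map_add, h1, h2]
      | tmul x y => simp [hErid]
    have h := congrArg Erid hF2
    rw [map_mul, map_one, bE, bE, hnorm2, mul_one] at h
    exact h
  -- basic unit computations
  have hA' : e (Finv ⊗ₜ (1 : H)) * e (F ⊗ₜ (1 : H)) = 1 := by
    rw [← map_mul, Algebra.TensorProduct.tmul_mul_tmul, hF2, mul_one,
      ← Algebra.TensorProduct.one_def, map_one]
  have hB : ((1 : H) ⊗ₜ[R] Finv) * ((1 : H) ⊗ₜ[R] F) = (1 : H ⊗[R] (H ⊗[R] H)) := by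
    rw [Algebra.TensorProduct.tmul_mul_tmul, hF2, mul_one,
      ← Algebra.TensorProduct.one_def]
  have hΦ : CΦ F * CΦ Finv = 1 := by rw [← map_mul, hF1, map_one]
  have hΨ : CΨ F * CΨ Finv = 1 := by rw [← map_mul, hF1, map_one]
  -- the two rearranged cocycle identities
  have h1 : ((1 : H) ⊗ₜ[R] Finv) * e (F ⊗ₜ (1 : H)) = CΨ F * CΦ Finv := by
    calc ((1 : H) ⊗ₜ[R] Finv) * e (F ⊗ₜ (1 : H))
        = (((1 : H) ⊗ₜ[R] Finv) * e (F ⊗ₜ (1 : H))) * (CΦ F * CΦ Finv) := by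
          rw [hΦ, mul_one]
      _ = ((1 : H) ⊗ₜ[R] Finv) * ((e (F ⊗ₜ (1 : H)) * CΦ F) * CΦ Finv) := by
          simp only [mul_assoc]
      _ = ((1 : H) ⊗ₜ[R] Finv) * ((((1 : H) ⊗ₜ[R] F) * CΨ F) * CΦ Finv) := by rw [hcocycle]
      _ = (((1 : H) ⊗ₜ[R] Finv) * ((1 : H) ⊗ₜ[R] F)) * (CΨ F * CΦ Finv) := by
          simp only [mul_assoc]
      _ = CΨ F * CΦ Finv := by rw [hB, one_mul]
  have h2 : CΦ F * CΨ Finv = e (Finv ⊗ₜ (1 : H)) * ((1 : H) ⊗ₜ[R] F) := by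
    calc CΦ F * CΨ Finv
        = (e (Finv ⊗ₜ (1 : H)) * e (F ⊗ₜ (1 : H))) * (CΦ F * CΨ Finv) := by
          rw [hA', one_mul]
      _ = e (Finv ⊗ₜ (1 : H)) * ((e (F ⊗ₜ (1 : H)) * CΦ F) * CΨ Finv) := by
          simp only [mul_assoc]
      _ = e (Finv ⊗ₜ (1 : H)) * ((((1 : H) ⊗ₜ[R] F) * CΨ F) * CΨ Finv) := by rw [hcocycle]
      _ = e (Finv ⊗ₜ (1 : H)) * (((1 : H) ⊗ₜ[R] F) * (CΨ F * CΨ Finv)) := by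
          simp only [mul_assoc]
      _ = e (Finv ⊗ₜ (1 : H)) * ((1 : H) ⊗ₜ[R] F) := by rw [hΨ, mul_one]
  constructor
  · -- u * v = 1
    have key := congrArg (DrinAux.χm (R := R) (H := H)) h1
    rw [bΨ, bΦ] at key
    rw [DrinAux.chiL 1 1 Finv F, DrinAux.chiC F Finv] at key
    rw [hnorm2, hεFinv, one_mul, mul_one, one_mul] at key
    rw [hu, hv]
    exact key
  · -- v * u = 1
    have key := congrArg (DrinAux.ψm (R := R) (H := H)) h2
    rw [bΨ, bΦ] at key
    rw [DrinAux.psiL 1 1 Finv F, DrinAux.psiC Finv F] at key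
    rw [hnorm1, hεFinv', DrinAux.antipode_one', one_mul, mul_one, one_mul] at key
    rw [hu, hv]
    exact key.symm
end
end

section
/- Let H be a Hopf algebra with antipode S and let F ∈ H ⊗ H be an invertible element satisfying the 2-cocycle and normalization conditions. Let u = m((id ⊗ S)(F)) be the Drinfeld element (which is invertible, with u⁻¹ = m((S ⊗ id)(F⁻¹))), and define the twisted antipode S^F(x) := u · S(x) · u⁻¹. Then S^F is an antipode for the twisted bialgebra (H, Δ^F, ε): for every x ∈ H, m((S^F ⊗ id)(Δ^F(x))) = ε(x)·1 and m((id ⊗ S^F)(Δ^F(x))) = ε(x)·1. -/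
open TensorProduct Coalgebra HopfAlgebra

section AntipodeAux
variable {R H : Type*} [CommRing R] [Ring H] [HopfAlgebra R H]

lemma antipode_one' : HopfAlgebra.antipode (R := R) (1 : H) = 1 := by
  have h := HopfAlgebra.mul_antipode_rTensor_comul_apply (R := R) (A := H) 1
  simpa [Algebra.TensorProduct.one_def] using h

lemma repr_sum_eright {a : H} {ι : Type*} (r : Coalgebra.Repr R a ι) :
    ∑ i ∈ r.index, counit (R := R) (r.right i) • r.left i = a := by
  have := congrArg (TensorProduct.rid R H) (sum_tmul_counit_eq r)
  rw [map_sum] at this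
  simp only [TensorProduct.rid_tmul] at this
  rw [this]; simp

lemma repr_sum_eleft {a : H} {ι : Type*} (r : Coalgebra.Repr R a ι) :
    ∑ i ∈ r.index, counit (R := R) (r.left i) • r.right i = a := by
  have := congrArg (TensorProduct.lid R H) (sum_counit_tmul_eq r)
  rw [map_sum] at this
  simp only [TensorProduct.lid_tmul] at this
  rw [this]; simp

variable {R H : Type*} [CommRing R] [Ring H] [HopfAlgebra R H]

/-- fold map: `x ⊗ (y ⊗ z) ↦ p x * (q y * r z)`. -/
noncomputable def lam (p q r : H →ₗ[R] H) : H ⊗[R] (H ⊗[R] H) →ₗ[R] H :=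
  (LinearMap.mul' R H).comp ((LinearMap.lTensor H (LinearMap.mul' R H)).comp
    (TensorProduct.map p (TensorProduct.map q r)))

@[simp] lemma lam_tmul (p q r : H →ₗ[R] H) (x y z : H) :
    lam p q r (x ⊗ₜ (y ⊗ₜ z)) = p x * (q y * r z) := by
  simp [lam]

lemma sum_antipode_mul_mul {x y : H} {ι κ : Type*} (rx : Coalgebra.Repr R x ι)
    (ry : Coalgebra.Repr R y κ) :
    ∑ j ∈ rx.index, ∑ l ∈ ry.index,
        antipode (R := R) (rx.left j * ry.left l) * (rx.right j * ry.right l)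
      = algebraMap R H (counit (R := R) x * counit (R := R) y) := by
  have e : ∑ j ∈ rx.index, ∑ l ∈ ry.index,
      (rx.left j * ry.left l) ⊗ₜ[R] (rx.right j * ry.right l) = comul (R := R) (x*y) := by
    rw [Bialgebra.comul_mul, ← rx.eq, ← ry.eq, Finset.sum_mul_sum]
    simp [Algebra.TensorProduct.tmul_mul_tmul]
  have h := congrArg (fun t => LinearMap.mul' R H
    ((HopfAlgebra.antipode (R := R) (A := H)).rTensor H t)) e
  simp only [map_sum, LinearMap.rTensor_tmul, LinearMap.mul'_apply,
    mul_antipode_rTensor_comul_apply, Bialgebra.counit_mul] at h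
  exact h

lemma four_sum_comm {M : Type*} [AddCommMonoid M] {ι₁ ι₂ : Type*} {σ : ι₁ → Type*}
    {τ : ι₂ → Type*}
    (s₁ : Finset ι₁) (s₂ : Finset ι₂) (f₁ : ∀ i, Finset (σ i)) (f₂ : ∀ k, Finset (τ k))
    (F : ∀ i : ι₁, σ i → ∀ k : ι₂, τ k → M) :
    ∑ i ∈ s₁, ∑ j ∈ f₁ i, ∑ k ∈ s₂, ∑ l ∈ f₂ k, F i j k l
      = ∑ k ∈ s₂, ∑ l ∈ f₂ k, ∑ i ∈ s₁, ∑ j ∈ f₁ i, F i j k l := by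
  calc ∑ i ∈ s₁, ∑ j ∈ f₁ i, ∑ k ∈ s₂, ∑ l ∈ f₂ k, F i j k l
      = ∑ p ∈ s₁.sigma f₁, ∑ q ∈ s₂.sigma f₂, F p.1 p.2 q.1 q.2 := by
        rw [Finset.sum_sigma]
        exact Finset.sum_congr rfl fun i _ => Finset.sum_congr rfl fun j _ =>
          (Finset.sum_sigma s₂ f₂ (fun q => F i j q.1 q.2)).symm
    _ = ∑ q ∈ s₂.sigma f₂, ∑ p ∈ s₁.sigma f₁, F p.1 p.2 q.1 q.2 := Finset.sum_comm
    _ = ∑ k ∈ s₂, ∑ l ∈ f₂ k, ∑ i ∈ s₁, ∑ j ∈ f₁ i, F i j k l := by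
        rw [Finset.sum_sigma]
        exact Finset.sum_congr rfl fun k _ => Finset.sum_congr rfl fun l _ =>
          (Finset.sum_sigma s₁ f₁ (fun p => F p.1 p.2 k l))

lemma gen1 {ι κ : Type*} (s : Finset ι) (t : Finset κ) (A : H) (P P' : ι → H) (Q Q' : κ → H) :
    ∑ j ∈ s, ∑ l ∈ t, A * ((P j * Q l) * (Q' l * P' j))
      = A * ∑ j ∈ s, P j * ((∑ l ∈ t, Q l * Q' l) * P' j) := by
  rw [Finset.mul_sum]
  refine Finset.sum_congr rfl fun j _ => ?_
  rw [Finset.sum_mul, Finset.mul_sum, Finset.mul_sum]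
  exact Finset.sum_congr rfl fun l _ => by simp [mul_assoc]

lemma gen2 {ι κ : Type*} (s : Finset ι) (t : Finset κ) (M N : ι → κ → H) (C : H) :
    ∑ j ∈ s, ∑ l ∈ t, M j l * (N j l * C) = (∑ j ∈ s, ∑ l ∈ t, M j l * N j l) * C := by
  simp [Finset.sum_mul, mul_assoc]

lemma antipode_mul' (a b : H) :
    HopfAlgebra.antipode (R := R) (a * b)
      = HopfAlgebra.antipode (R := R) b * HopfAlgebra.antipode (R := R) (a : H) := by
  classical
  set S : H →ₗ[R] H := HopfAlgebra.antipode (R := R) with hS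
  let ra : Coalgebra.Repr R a (H × H) := Coalgebra.Repr.arbitrary R a
  let rb : Coalgebra.Repr R b (H × H) := Coalgebra.Repr.arbitrary R b
  let ra1 : ∀ i, Coalgebra.Repr R (ra.left i) (H × H) := fun i => Coalgebra.Repr.arbitrary R _
  let ra2 : ∀ i, Coalgebra.Repr R (ra.right i) (H × H) := fun i => Coalgebra.Repr.arbitrary R _
  let rb1 : ∀ k, Coalgebra.Repr R (rb.left k) (H × H) := fun k => Coalgebra.Repr.arbitrary R _
  let rb2 : ∀ k, Coalgebra.Repr R (rb.right k) (H × H) := fun k => Coalgebra.Repr.arbitrary R _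
  -- the master sums
  set X : H := ∑ i ∈ ra.index, ∑ j ∈ (ra2 i).index, ∑ k ∈ rb.index, ∑ l ∈ (rb2 k).index,
      S (ra.left i * rb.left k) *
        (((ra2 i).left j * (rb2 k).left l) *
          (S ((rb2 k).right l) * S ((ra2 i).right j))) with hX
  set Y : H := ∑ i ∈ ra.index, ∑ j ∈ (ra1 i).index, ∑ k ∈ rb.index, ∑ l ∈ (rb2 k).index,
      S ((ra1 i).left j * rb.left k) *
        (((ra1 i).right j * (rb2 k).left l) *
          (S ((rb2 k).right l) * S (ra.right i))) with hY
  set Z : H := ∑ k ∈ rb.index, ∑ l ∈ (rb1 k).index, ∑ i ∈ ra.index, ∑ j ∈ (ra1 i).index,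
      S ((ra1 i).left j * (rb1 k).left l) *
        (((ra1 i).right j * (rb1 k).right l) *
          (S (rb.right k) * S (ra.right i))) with hZ
  -- Step 1 : X = S (a * b)
  have step1 : X = S (a * b) := by
    have hab : S (a * b) = ∑ i ∈ ra.index, ∑ k ∈ rb.index,
        counit (R := R) (ra.right i) •
          (counit (R := R) (rb.right k) • S (ra.left i * rb.left k)) := by
      conv_lhs => rw [← repr_sum_eright ra, ← repr_sum_eright rb]
      rw [Finset.sum_mul_sum, map_sum]
      refine Finset.sum_congr rfl fun i _ => ?_
      rw [map_sum]
      refine Finset.sum_congr rfl fun k _ => ?_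
      rw [smul_mul_assoc, mul_smul_comm, map_smul, map_smul]
    rw [hab, hX]
    refine Finset.sum_congr rfl fun i _ => ?_
    rw [Finset.sum_comm]
    refine Finset.sum_congr rfl fun k _ => ?_
    rw [gen1]
    rw [sum_mul_antipode_eq_smul (rb2 k)]
    simp only [smul_mul_assoc, one_mul, mul_smul_comm]
    rw [← Finset.smul_sum, sum_mul_antipode_eq_smul (ra2 i)]
    rw [mul_smul_comm, mul_smul_comm, mul_one, smul_smul, smul_smul, mul_comm]
  -- the two coassociativity swaps
  let Λa : H ⊗[R] (H ⊗[R] H) →ₗ[R] H :=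
    ∑ k ∈ rb.index, ∑ l ∈ (rb2 k).index,
      lam (S ∘ₗ LinearMap.mulRight R (rb.left k))
        (LinearMap.mulRight R ((rb2 k).left l))
        (LinearMap.mulLeft R (S ((rb2 k).right l)) ∘ₗ S)
  have expΛa : ∀ x y z : H, Λa (x ⊗ₜ (y ⊗ₜ z)) =
      ∑ k ∈ rb.index, ∑ l ∈ (rb2 k).index,
        S (x * rb.left k) * ((y * (rb2 k).left l) * (S ((rb2 k).right l) * S z)) := by
    intro x y z
    simp [Λa, LinearMap.sum_apply]
  have cA := congrArg Λa (sum_tmul_tmul_eq ra ra1 ra2)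
  rw [map_sum, map_sum] at cA
  simp only [map_sum, expΛa] at cA
  have step2 : Y = X := by rw [hY, hX]; exact cA
  -- second swap
  let Λb : H ⊗[R] (H ⊗[R] H) →ₗ[R] H :=
    ∑ i ∈ ra.index, ∑ j ∈ (ra1 i).index,
      lam (S ∘ₗ LinearMap.mulLeft R ((ra1 i).left j))
        (LinearMap.mulLeft R ((ra1 i).right j))
        (LinearMap.mulRight R (S (ra.right i)) ∘ₗ S)
  have expΛb : ∀ x y z : H, Λb (x ⊗ₜ (y ⊗ₜ z)) =
      ∑ i ∈ ra.index, ∑ j ∈ (ra1 i).index,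
        S ((ra1 i).left j * x) * (((ra1 i).right j * y) * (S z * S (ra.right i))) := by
    intro x y z
    simp [Λb, LinearMap.sum_apply]
  have cB := congrArg Λb (sum_tmul_tmul_eq rb rb1 rb2)
  rw [map_sum, map_sum] at cB
  simp only [map_sum, expΛb] at cB
  have step3 : Z = Y := by
    rw [hZ, hY, cB]
    exact (four_sum_comm ra.index rb.index (fun i => (ra1 i).index)
      (fun k => (rb2 k).index) _).symm
  -- Step 4 : Z = S b * S a
  have step4 : Z = S b * S a := by
    have hZ' : Z = ∑ i ∈ ra.index, ∑ k ∈ rb.index,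
        (counit (R := R) (ra.left i) * counit (R := R) (rb.left k)) •
          (S (rb.right k) * S (ra.right i)) := by
      rw [hZ, four_sum_comm rb.index ra.index (fun k => (rb1 k).index)
        (fun i => (ra1 i).index)]
      refine Finset.sum_congr rfl fun i _ => ?_
      rw [Finset.sum_comm]
      refine Finset.sum_congr rfl fun k _ => ?_
      rw [gen2, sum_antipode_mul_mul (ra1 i) (rb1 k), ← Algebra.smul_def]
    have hba : S b * S a = ∑ i ∈ ra.index, ∑ k ∈ rb.index,
        (counit (R := R) (ra.left i) * counit (R := R) (rb.left k)) •
          (S (rb.right k) * S (ra.right i)) := by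
      conv_lhs => rw [← repr_sum_eleft ra, ← repr_sum_eleft rb]
      rw [map_sum, map_sum, Finset.sum_mul_sum, Finset.sum_comm]
      refine Finset.sum_congr rfl fun i _ => Finset.sum_congr rfl fun k _ => ?_
      rw [map_smul, map_smul, smul_mul_assoc, mul_smul_comm, smul_smul, mul_comm]
    rw [hZ', hba]
  rw [← step1, ← step2, ← step3, step4]

end AntipodeAux

section Sand
variable {R H : Type*} [CommRing R] [Ring H] [HopfAlgebra R H]

/-- `a ⊗ b ↦ (c ↦ S a * c * b)` -/
noncomputable def sandL : H ⊗[R] H →ₗ[R] Module.End R H :=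
  TensorProduct.lift <| LinearMap.mk₂ R
    (fun a b => LinearMap.mulRight R b ∘ₗ LinearMap.mulLeft R (HopfAlgebra.antipode (R := R) a))
    (by intro a a' b; ext c; simp [add_mul])
    (by intro r a b; ext c; simp [smul_mul_assoc])
    (by intro a b b'; ext c; simp [mul_add])
    (by intro r a b; ext c; simp [mul_smul_comm])

@[simp] lemma sandL_tmul (a b c : H) :
    sandL (R := R) (a ⊗ₜ b) c = HopfAlgebra.antipode (R := R) a * c * b := rfl

/-- `a ⊗ b ↦ (c ↦ a * c * S b)` -/
noncomputable def sandR : H ⊗[R] H →ₗ[R] Module.End R H :=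
  TensorProduct.lift <| LinearMap.mk₂ R
    (fun a b => LinearMap.mulRight R (HopfAlgebra.antipode (R := R) b) ∘ₗ LinearMap.mulLeft R a)
    (by intro a a' b; ext c; simp [add_mul])
    (by intro r a b; ext c; simp [smul_mul_assoc])
    (by intro a b b'; ext c; simp [mul_add])
    (by intro r a b; ext c; simp [mul_smul_comm])

@[simp] lemma sandR_tmul (a b c : H) :
    sandR (R := R) (a ⊗ₜ b) c = a * c * HopfAlgebra.antipode (R := R) b := rfl

lemma sandL_mul (y z : H ⊗[R] H) (c : H) :
    sandL (R := R) (y * z) c = sandL z (sandL y c) := by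
  induction y using TensorProduct.induction_on with
  | zero => simp
  | add y y' hy hy' => simp [add_mul, hy, hy']
  | tmul p q =>
    induction z using TensorProduct.induction_on with
    | zero => simp
    | add z z' hz hz' => simp [mul_add, add_mul, hz, hz']
    | tmul a b =>
      simp [Algebra.TensorProduct.tmul_mul_tmul, antipode_mul', mul_assoc]

lemma sandR_mul (y z : H ⊗[R] H) (c : H) :
    sandR (R := R) (y * z) c = sandR y (sandR z c) := by
  induction y using TensorProduct.induction_on with
  | zero => simp
  | add y y' hy hy' => simp [add_mul, hy, hy']
  | tmul p q =>
    induction z using TensorProduct.induction_on with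
    | zero => simp
    | add z z' hz hz' => simp [mul_add, add_mul, hz, hz']
    | tmul a b =>
      simp [Algebra.TensorProduct.tmul_mul_tmul, antipode_mul', mul_assoc]

@[simp] lemma sandL_one (c : H) : sandL (R := R) (1 : H ⊗[R] H) c = c := by
  simp [Algebra.TensorProduct.one_def, antipode_one']

@[simp] lemma sandR_one (c : H) : sandR (R := R) (1 : H ⊗[R] H) c = c := by
  simp [Algebra.TensorProduct.one_def, antipode_one']

lemma mulSid (y : H ⊗[R] H) :
    LinearMap.mul' R H
      ((TensorProduct.map (HopfAlgebra.antipode (R := R)) LinearMap.id) y) = sandL y 1 := by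
  induction y using TensorProduct.induction_on with
  | zero => simp
  | add y y' hy hy' => simp [hy, hy']
  | tmul a b => simp

lemma mulidS (y : H ⊗[R] H) :
    LinearMap.mul' R H
      ((TensorProduct.map LinearMap.id (HopfAlgebra.antipode (R := R))) y) = sandR y 1 := by
  induction y using TensorProduct.induction_on with
  | zero => simp
  | add y y' hy hy' => simp [hy, hy']
  | tmul a b => simp

lemma sandL_comul (x : H) :
    sandL (R := R) (comul x) 1 = counit (R := R) x • (1 : H) := by
  rw [← mulSid]
  have : (TensorProduct.map (HopfAlgebra.antipode (R := R)) (LinearMap.id (M := H)))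
      = (HopfAlgebra.antipode (R := R) (A := H)).rTensor H := rfl
  rw [this, mul_antipode_rTensor_comul_apply, Algebra.algebraMap_eq_smul_one]

lemma sandR_comul (x : H) :
    sandR (R := R) (comul x) 1 = counit (R := R) x • (1 : H) := by
  rw [← mulidS]
  have : (TensorProduct.map (LinearMap.id (M := H)) (HopfAlgebra.antipode (R := R)))
      = (HopfAlgebra.antipode (R := R) (A := H)).lTensor H := rfl
  rw [this, mul_antipode_lTensor_comul_apply, Algebra.algebraMap_eq_smul_one]

end Sand


section Main
variable {R H : Type*} [CommRing R] [Ring H] [HopfAlgebra R H]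

lemma main1expr (u v : H) (SF : H →ₗ[R] H)
    (hSF : ∀ x : H, SF x = u * HopfAlgebra.antipode (R := R) x * v) (w : H ⊗[R] H) :
    LinearMap.mul' R H ((TensorProduct.map SF LinearMap.id) w) = u * sandL w v := by
  induction w using TensorProduct.induction_on with
  | zero => simp
  | add y y' hy hy' => simp [hy, hy', mul_add]
  | tmul a b => simp [hSF, mul_assoc]

lemma main2expr (u v : H) (SF : H →ₗ[R] H)
    (hSF : ∀ x : H, SF x = u * HopfAlgebra.antipode (R := R) x * v) (w : H ⊗[R] H) :
    LinearMap.mul' R H ((TensorProduct.map LinearMap.id SF) w) = sandR w u * v := by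
  induction w using TensorProduct.induction_on with
  | zero => simp
  | add y y' hy hy' => simp [hy, hy', add_mul]
  | tmul a b => simp [hSF, mul_assoc]

end Main


/-- Let `H` be a Hopf algebra with antipode `S`, `F ∈ H ⊗ H` an invertible
element satisfying the 2-cocycle and normalization conditions, and let
`u = m((id ⊗ S)(F))` be the Drinfeld element, invertible with `u⁻¹ = v = m((S ⊗ id)(F⁻¹))`.
Then the twisted antipode `S^F(x) = u · S(x) · u⁻¹` is an antipode for the twisted bialgebra
`(H, Δ^F, ε)`: `m((S^F ⊗ id)(Δ^F(x))) = ε(x)·1` and `m((id ⊗ S^F)(Δ^F(x))) = ε(x)·1`. -/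
theorem twisted_antipode {R H : Type*} [CommRing R] [Ring H] [HopfAlgebra R H]
    (F Finv : H ⊗[R] H)
    (hF1 : F * Finv = 1) (hF2 : Finv * F = 1)
    (hcocycle :
      (Algebra.TensorProduct.assoc R R R H H H) (F ⊗ₜ (1 : H)) *
        ((Algebra.TensorProduct.assoc R R R H H H).toAlgHom.comp
          (Algebra.TensorProduct.map (Bialgebra.comulAlgHom R H) (AlgHom.id R H))) F =
      ((1 : H) ⊗ₜ F) *
        (Algebra.TensorProduct.map (AlgHom.id R H) (Bialgebra.comulAlgHom R H)) F)
    (hnorm1 : (TensorProduct.lid R H)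
        ((TensorProduct.map (Coalgebra.counit (R := R)) LinearMap.id) F) = 1)
    (hnorm2 : (TensorProduct.rid R H)
        ((TensorProduct.map LinearMap.id (Coalgebra.counit (R := R))) F) = 1)
    (u v : H)
    (hu : u = LinearMap.mul' R H
      ((TensorProduct.map LinearMap.id (HopfAlgebra.antipode (R := R))) F))
    (hv : v = LinearMap.mul' R H
      ((TensorProduct.map (HopfAlgebra.antipode (R := R)) LinearMap.id) Finv))
    (huv : u * v = 1) (hvu : v * u = 1)
    (SF : H →ₗ[R] H)
    (hSF : ∀ x : H, SF x = u * HopfAlgebra.antipode (R := R) x * v) :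
    ∀ x : H,
      LinearMap.mul' R H
          ((TensorProduct.map SF LinearMap.id) (F * Coalgebra.comul x * Finv)) =
        Coalgebra.counit (R := R) x • (1 : H) ∧
      LinearMap.mul' R H
          ((TensorProduct.map LinearMap.id SF) (F * Coalgebra.comul x * Finv)) =
        Coalgebra.counit (R := R) x • (1 : H) := by
  have hv' : sandL (R := R) Finv 1 = v := (hv.trans (mulSid Finv)).symm
  have hu' : sandR (R := R) F 1 = u := (hu.trans (mulidS F)).symm
  intro x
  constructor
  · rw [main1expr u v SF hSF]
    have e1 : sandL (R := R) F v = 1 := by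
      rw [← hv', ← sandL_mul, hF2, sandL_one]
    rw [sandL_mul, sandL_mul, e1, sandL_comul, map_smul, hv', mul_smul_comm, huv]
  · rw [main2expr u v SF hSF]
    have e1 : sandR (R := R) Finv u = 1 := by
      rw [← hu', ← sandR_mul, hF2, sandR_one]
    rw [sandR_mul, sandR_mul, e1, sandR_comul, map_smul, hu', smul_mul_assoc, huv]
end

section
/- Fix n ≥ 2 and complex parameters h, s. On the polynomial algebra A = ℂ[x⁰, …, x^{n-1}] define the operators X̂⁰ := M₀ − h·s·Σ_{k=1}^{n-1} M_k ∘ P_k and X̂ʲ := M_j ∘ T_c for j = 1, …, n−1, where c := −i(1−s)h (so that T_c realizes the formal operator e^{(1−s)h P₀}). Then these operators satisfy the κ-Minkowski commutation relations: [X̂⁰, X̂ʲ] = i·h·X̂ʲ and [X̂ʲ, X̂ᵏ] = 0 for all j, k ∈ {1, …, n−1}. (This is the Heisenberg realization of κ-Minkowski spacetime arising from the one-parameter Abelian family of twists.) -/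
open MvPolynomial

/-- Multiplication operator by the variable `x^μ` on `ℂ[x⁰, …, x^{n-1}]`. -/
noncomputable def Mop {n : ℕ} (μ : Fin n) : Module.End ℂ (MvPolynomial (Fin n) ℂ) :=
  LinearMap.mulLeft ℂ (MvPolynomial.X μ)

/-- Momentum operator `P_μ = −i·∂_μ` on `ℂ[x⁰, …, x^{n-1}]`. -/
noncomputable def Pop {n : ℕ} (μ : Fin n) : Module.End ℂ (MvPolynomial (Fin n) ℂ) :=
  (-Complex.I) • (MvPolynomial.pderiv μ).toLinearMap

/-- The shift operator `T_c = e^{c∂₀}`: the algebra endomorphism of `ℂ[x⁰, …, x^{n-1}]`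
substituting `x⁰ ↦ x⁰ + c` (where `z` is the index of the time variable `x⁰`)
and fixing the other variables. -/
noncomputable def Tshift {n : ℕ} (z : Fin n) (c : ℂ) : Module.End ℂ (MvPolynomial (Fin n) ℂ) :=
  (MvPolynomial.aeval fun i : Fin n =>
    if i = z then MvPolynomial.X z + MvPolynomial.C c else MvPolynomial.X i).toLinearMap

/-- Abelian-twist realization of the κ-Minkowski time coordinate:
`X̂⁰ = M₀ − h·s·Σ_{k≠0} M_k ∘ P_k` (i.e. `x̂⁰ = x⁰ − h s x^k P_k`). -/
noncomputable def abXhatTime {n : ℕ} (z : Fin n) (h s : ℂ) :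
    Module.End ℂ (MvPolynomial (Fin n) ℂ) :=
  Mop z - (h * s) • ∑ k ∈ ({z}ᶜ : Finset (Fin n)), (Mop k ∘ₗ Pop k)

/-- Abelian-twist realization of the κ-Minkowski space coordinates:
`X̂ʲ = M_j ∘ T_c` with `c = −i(1−s)h`, realizing `x̂ʲ = x^j e^{(1−s)h P₀}`. -/
noncomputable def abXhatSpace {n : ℕ} (z : Fin n) (h s : ℂ) (j : Fin n) :
    Module.End ℂ (MvPolynomial (Fin n) ℂ) :=
  Mop j ∘ₗ Tshift z (-Complex.I * (1 - s) * h)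

lemma Tshift_mul {n : ℕ} (z : Fin n) (c : ℂ) (p q : MvPolynomial (Fin n) ℂ) :
    Tshift z c (p * q) = Tshift z c p * Tshift z c q := by
  simp [Tshift]

lemma Tshift_X_ne {n : ℕ} {z j : Fin n} (c : ℂ) (h : j ≠ z) :
    Tshift z c (X j) = X j := by simp [Tshift, h]

lemma Tshift_X_self {n : ℕ} (z : Fin n) (c : ℂ) :
    Tshift z c (X z) = X z + C c := by simp [Tshift]

lemma pderiv_Tshift_X {n : ℕ} (z : Fin n) (c : ℂ) (k i : Fin n) :
    pderiv k (Tshift z c (X i)) = Tshift z c (pderiv k (X i)) := by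
  by_cases hik : i = k
  · subst hik
    rw [pderiv_X_self]
    have h1 : Tshift z c (1 : MvPolynomial (Fin n) ℂ) = 1 := by simp [Tshift]
    rw [h1]
    by_cases hi : i = z
    · subst hi; rw [Tshift_X_self]; simp
    · rw [Tshift_X_ne c hi, pderiv_X_self]
  · rw [pderiv_X_of_ne hik]
    rw [map_zero]
    by_cases hi : i = z
    · subst hi; rw [Tshift_X_self]; simp [pderiv_X_of_ne hik]
    · rw [Tshift_X_ne c hi, pderiv_X_of_ne hik]

lemma pderiv_Tshift {n : ℕ} (z : Fin n) (c : ℂ) (k : Fin n) (p : MvPolynomial (Fin n) ℂ) :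
    pderiv k (Tshift z c p) = Tshift z c (pderiv k p) := by
  induction p using MvPolynomial.induction_on with
  | C a => simp [Tshift]
  | add p q hp hq => simp [map_add, hp, hq]
  | mul_X p i hp =>
    rw [Tshift_mul, pderiv_mul, pderiv_mul, hp, map_add, Tshift_mul, Tshift_mul, pderiv_Tshift_X]

lemma abXhatTime_apply {n : ℕ} (z : Fin n) (h s : ℂ) (r : MvPolynomial (Fin n) ℂ) :
    abXhatTime z h s r =
      X z * r + (Complex.I * h * s) • ∑ k ∈ ({z}ᶜ : Finset (Fin n)), X k * pderiv k r := by
  simp only [abXhatTime, Mop, Pop, LinearMap.sub_apply, LinearMap.smul_apply,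
    LinearMap.sum_apply, LinearMap.comp_apply, LinearMap.mulLeft_apply,
    mul_smul_comm, ← Finset.smul_sum, smul_smul]
  rw [sub_eq_add_neg, ← neg_smul]
  congr 2
  ring

lemma abXhatSpace_apply {n : ℕ} (z : Fin n) (h s : ℂ) (j : Fin n)
    (p : MvPolynomial (Fin n) ℂ) :
    abXhatSpace z h s j p = X j * Tshift z (-Complex.I * (1 - s) * h) p := by
  simp [abXhatSpace, Mop]

/-- For `n ≥ 2` and parameters `h, s ∈ ℂ`, the operators
`X̂⁰ = M₀ − h·s·Σ_k M_k∘P_k` and `X̂ʲ = M_j ∘ T_{−i(1−s)h}` on `ℂ[x⁰, …, x^{n-1}]`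
satisfy the κ-Minkowski commutation relations `[X̂⁰, X̂ʲ] = i·h·X̂ʲ`, `[X̂ʲ, X̂ᵏ] = 0`. -/
theorem abelian_twist_kappaMinkowski (n : ℕ) (hn : 2 ≤ n) (h s : ℂ)
    (z : Fin n) (hz : (z : ℕ) = 0) :
    (∀ j : Fin n, j ≠ z →
      abXhatTime z h s ∘ₗ abXhatSpace z h s j - abXhatSpace z h s j ∘ₗ abXhatTime z h s =
        (Complex.I * h) • abXhatSpace z h s j) ∧
    (∀ j k : Fin n, j ≠ z → k ≠ z →
      abXhatSpace z h s j ∘ₗ abXhatSpace z h s k -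
        abXhatSpace z h s k ∘ₗ abXhatSpace z h s j = 0) := by
  classical
  set c : ℂ := -Complex.I * (1 - s) * h with hc
  constructor
  · intro j hj
    refine LinearMap.ext fun p => ?_
    set q : MvPolynomial (Fin n) ℂ := Tshift z c p with hq
    have hjmem : j ∈ ({z}ᶜ : Finset (Fin n)) := by simpa using hj
    have E1 : ∑ k ∈ ({z}ᶜ : Finset (Fin n)), X k * pderiv k (X j * q)
        = X j * q + X j * ∑ k ∈ ({z}ᶜ : Finset (Fin n)), X k * pderiv k q := by
      have step : ∀ k ∈ ({z}ᶜ : Finset (Fin n)),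
          X k * pderiv k (X j * q)
            = (if k = j then X j * q else 0) + X j * (X k * pderiv k q) := by
        intro k _
        rw [pderiv_mul]
        by_cases hkj : k = j
        · subst hkj; rw [pderiv_X_self]; simp [if_pos rfl]; ring
        · rw [pderiv_X_of_ne (Ne.symm hkj), if_neg hkj]; ring
      rw [Finset.sum_congr rfl step, Finset.sum_add_distrib, Finset.sum_ite_eq' _ j,
        if_pos hjmem, Finset.mul_sum]
    have E2 : ∑ k ∈ ({z}ᶜ : Finset (Fin n)), Tshift z c (X k * pderiv k p)
        = ∑ k ∈ ({z}ᶜ : Finset (Fin n)), X k * pderiv k q := by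
      refine Finset.sum_congr rfl fun k hk => ?_
      have hkz : k ≠ z := by simpa using hk
      rw [Tshift_mul, Tshift_X_ne c hkz, hq, pderiv_Tshift]
    simp only [LinearMap.sub_apply, LinearMap.comp_apply, LinearMap.smul_apply]
    rw [abXhatSpace_apply, abXhatSpace_apply, abXhatTime_apply, abXhatTime_apply, ← hc, ← hq,
      map_add, map_smul, Tshift_mul, Tshift_X_self, map_sum, E1, E2, ← hq]
    set S : MvPolynomial (Fin n) ℂ := ∑ k ∈ ({z}ᶜ : Finset (Fin n)), X k * pderiv k q with hS
    simp only [Algebra.smul_def, algebraMap_eq, hc, map_mul, map_neg, map_sub, map_one]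
    ring
  · intro j k hj hk
    refine LinearMap.ext fun p => ?_
    simp only [LinearMap.sub_apply, LinearMap.comp_apply, LinearMap.zero_apply]
    rw [abXhatSpace_apply, abXhatSpace_apply, abXhatSpace_apply, abXhatSpace_apply,
      Tshift_mul, Tshift_mul, Tshift_X_ne _ hj, Tshift_X_ne _ hk]
    ring
end

section
/- Fix n ≥ 2 and complex parameters h, s, and let X̂⁰ := M₀ − h·s·Σ_{k=1}^{n-1} M_k ∘ P_k and X̂ʲ := M_j ∘ T_c with c := −i(1−s)h be the Abelian-twist realization of κ-Minkowski coordinates on A = ℂ[x⁰, …, x^{n-1}]. Then together with the momenta P_μ = −i∂_μ they close the s-deformed phase space relations: [X̂⁰, P₀] = i·id, [X̂ʲ, P₀] = 0, [X̂ʲ, P_k] = i·δʲ_k·T_c (i.e. i·δʲ_k·e^{(1−s)hP₀}), and [X̂⁰, P_k] = −i·h·s·P_k, for all j, k ∈ {1, …, n−1}. -/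
open MvPolynomial

lemma pderiv_comm' {σ R : Type*} [CommSemiring R] [DecidableEq σ] (i j : σ)
    (p : MvPolynomial σ R) :
    pderiv i (pderiv j p) = pderiv j (pderiv i p) := by
  induction p using MvPolynomial.induction_on with
  | C a => simp
  | add p q hp hq => simp [hp, hq]
  | mul_X p q h =>
    simp only [pderiv_mul, pderiv_X, map_add, h, Pi.single_apply]
    split_ifs <;> simp <;> ring

lemma pderiv_tshift {n : ℕ} (z : Fin n) (c : ℂ) (ν : Fin n) (p : MvPolynomial (Fin n) ℂ) :
    pderiv ν ((aeval fun i : Fin n =>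
      if i = z then X z + C c else X i) p) =
    (aeval fun i : Fin n => if i = z then X z + C c else X i) (pderiv ν p) := by
  induction p using MvPolynomial.induction_on with
  | C a => simp
  | add p q hp hq => simp only [map_add, hp, hq]
  | mul_X p q h =>
    simp only [map_mul, aeval_X, pderiv_mul, map_add, h]
    congr 1
    by_cases hq : q = z
    · by_cases hν : ν = z <;> simp [hq, hν, Pi.single_apply]
    · by_cases hν : ν = q
      · subst hν; simp [hq, Pi.single_apply, Ne.symm hq]
      · simp [hq, Pi.single_apply, hν, Ne.symm hν]

lemma comm_MP {n : ℕ} (μ ν : Fin n) :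
    Mop μ ∘ₗ Pop ν - Pop ν ∘ₗ Mop μ =
      (if μ = ν then Complex.I • (LinearMap.id : Module.End ℂ (MvPolynomial (Fin n) ℂ)) else 0) := by
  refine LinearMap.ext fun p => ?_
  simp only [LinearMap.sub_apply, LinearMap.comp_apply, Mop, Pop, LinearMap.mulLeft_apply,
    LinearMap.smul_apply, LinearMap.id_apply, pderiv_mul, pderiv_X,
    LinearMap.zero_apply]
  split_ifs with hμ <;> simp [smul_eq_C_mul, Pi.single_apply, hμ] <;> ring

lemma comm_PP {n : ℕ} (μ ν : Fin n) :
    (Pop μ ∘ₗ Pop ν : Module.End ℂ (MvPolynomial (Fin n) ℂ)) = Pop ν ∘ₗ Pop μ := by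
  refine LinearMap.ext fun p => ?_
  simp [Pop, pderiv_comm' μ ν p]

lemma comm_PT {n : ℕ} (z ν : Fin n) (c : ℂ) :
    (Pop ν ∘ₗ Tshift z c : Module.End ℂ (MvPolynomial (Fin n) ℂ)) = Tshift z c ∘ₗ Pop ν := by
  refine LinearMap.ext fun p => ?_
  show (-Complex.I) • pderiv ν ((aeval fun i : Fin n =>
      if i = z then X z + C c else X i) p) =
    (aeval fun i : Fin n => if i = z then X z + C c else X i) ((-Complex.I) • pderiv ν p)
  rw [map_smul, pderiv_tshift]

lemma comm_MPP {n : ℕ} (k μ : Fin n) :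
    (Mop k ∘ₗ Pop k) ∘ₗ Pop μ - Pop μ ∘ₗ (Mop k ∘ₗ Pop k) =
      (if k = μ then Complex.I • Pop k else 0) := by
  rw [LinearMap.comp_assoc (Pop μ) (Pop k) (Mop k), comm_PP,
    ← LinearMap.comp_assoc (Pop k) (Pop μ) (Mop k),
    ← LinearMap.comp_assoc (Pop k) (Mop k) (Pop μ),
    ← LinearMap.sub_comp, comm_MP]
  split_ifs <;> simp [LinearMap.smul_comp]

lemma time_comm {n : ℕ} (z μ : Fin n) (h s : ℂ) :
    abXhatTime z h s ∘ₗ Pop μ - Pop μ ∘ₗ abXhatTime z h s =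
      (Mop z ∘ₗ Pop μ - Pop μ ∘ₗ Mop z) -
      (h * s) • ∑ k ∈ ({z}ᶜ : Finset (Fin n)),
        ((Mop k ∘ₗ Pop k) ∘ₗ Pop μ - Pop μ ∘ₗ (Mop k ∘ₗ Pop k)) := by
  simp only [abXhatTime, ← Module.End.mul_eq_comp, sub_mul, mul_sub, smul_mul_assoc,
    mul_smul_comm, Finset.sum_mul, Finset.mul_sum, smul_sub, Finset.sum_sub_distrib]
  abel

lemma space_comm {n : ℕ} (z j μ : Fin n) (h s : ℂ) :
    abXhatSpace z h s j ∘ₗ Pop μ - Pop μ ∘ₗ abXhatSpace z h s j =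
      (Mop j ∘ₗ Pop μ - Pop μ ∘ₗ Mop j) ∘ₗ Tshift z (-Complex.I * (1 - s) * h) := by
  rw [abXhatSpace, LinearMap.comp_assoc, ← comm_PT, LinearMap.sub_comp, LinearMap.comp_assoc,
    LinearMap.comp_assoc]

/-- For `n ≥ 2` and parameters `h, s ∈ ℂ`, the Abelian-twist κ-Minkowski
coordinates `X̂⁰, X̂ʲ` together with the momenta `P_μ = −i∂_μ` close the `s`-deformed phase
space relations: `[X̂⁰, P₀] = i·id`, `[X̂ʲ, P₀] = 0`,
`[X̂ʲ, P_k] = i·δʲ_k·e^{(1−s)hP₀}` and `[X̂⁰, P_k] = −i·h·s·P_k`. -/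
theorem abelian_twist_deformed_phase_space (n : ℕ) (hn : 2 ≤ n) (h s : ℂ)
    (z : Fin n) (hz : (z : ℕ) = 0) :
    (abXhatTime z h s ∘ₗ Pop z - Pop z ∘ₗ abXhatTime z h s =
      Complex.I • (LinearMap.id : Module.End ℂ (MvPolynomial (Fin n) ℂ))) ∧
    (∀ j : Fin n, j ≠ z →
      abXhatSpace z h s j ∘ₗ Pop z - Pop z ∘ₗ abXhatSpace z h s j = 0) ∧
    (∀ j k : Fin n, j ≠ z → k ≠ z →
      abXhatSpace z h s j ∘ₗ Pop k - Pop k ∘ₗ abXhatSpace z h s j =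
        if j = k then Complex.I • Tshift z (-Complex.I * (1 - s) * h) else 0) ∧
    (∀ k : Fin n, k ≠ z →
      abXhatTime z h s ∘ₗ Pop k - Pop k ∘ₗ abXhatTime z h s =
        (-Complex.I * h * s) • Pop k) := by
  refine ⟨?_, ?_, ?_, ?_⟩
  · rw [time_comm, comm_MP]
    have hsum : ∑ k ∈ ({z}ᶜ : Finset (Fin n)),
        ((Mop k ∘ₗ Pop k) ∘ₗ Pop z - Pop z ∘ₗ (Mop k ∘ₗ Pop k)) = 0 := by
      refine Finset.sum_eq_zero fun k hk => ?_
      rw [comm_MPP, if_neg (by simpa using hk)]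
    rw [hsum]
    simp
  · intro j hj
    rw [space_comm, comm_MP, if_neg hj, LinearMap.zero_comp]
  · intro j k hj hk
    rw [space_comm, comm_MP]
    split_ifs <;> simp [LinearMap.smul_comp]
  · intro k hk
    rw [time_comm, comm_MP, if_neg (Ne.symm hk)]
    have hsum : ∑ j ∈ ({z}ᶜ : Finset (Fin n)),
        ((Mop j ∘ₗ Pop j) ∘ₗ Pop k - Pop k ∘ₗ (Mop j ∘ₗ Pop j)) = Complex.I • Pop k := by
      rw [Finset.sum_congr rfl fun j _ => comm_MPP j k]
      rw [Finset.sum_ite_eq' ({z}ᶜ : Finset (Fin n)) k fun j => Complex.I • Pop j]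
      rw [if_pos (by simpa using hk)]
    rw [hsum, zero_sub, smul_smul, ← neg_smul]
    congr 1
    ring
end

section
/- Fix n ≥ 2, a complex parameter h, and r ∈ ℂ with r ≠ 0. On the polynomial algebra A = ℂ[x⁰, …, x^{n-1}] define X̂⁰ := M₀ ∘ (id + i·h·r·∂₀) (realizing x⁰(1 − hrP₀)) and X̂ⁱ := M_i ∘ g_r for i = 1, …, n−1, where g_r := Σ_{m≥0} binom(−1/r, m)·(i h r)^m·∂₀^m is the binomial-series operator realizing (1 − hrP₀)^{−1/r} (a well-defined ℂ-linear endomorphism of A, since ∂₀ is locally nilpotent on polynomials so the sum is finite on each polynomial). Then the κ-Minkowski relations hold: [X̂⁰, X̂ⁱ] = i·h·X̂ⁱ and [X̂ⁱ, X̂ʲ] = 0 for all i, j ∈ {1, …, n−1}. (This is the Heisenberg realization of κ-Minkowski spacetime arising from the Jordanian family of twists.) -/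
open MvPolynomial Finset

/-- The generalized binomial coefficient `binom(α, m) = α(α−1)⋯(α−m+1)/m!`. -/
noncomputable def genBinom (α : ℂ) (m : ℕ) : ℂ :=
  (∏ i ∈ Finset.range m, (α - (i : ℂ))) / (Nat.factorial m : ℂ)

namespace JTaux

variable {n : ℕ} (z : Fin n)

lemma pd_deg (f : MvPolynomial (Fin n) ℂ) (d : ℕ)
    (hf : f.totalDegree ≤ d + 1) : (pderiv z f).totalDegree ≤ d := by
  conv_lhs => rw [f.as_sum]
  rw [map_sum]
  apply totalDegree_finsetSum_le
  intro s hs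
  rw [pderiv_monomial]
  by_cases hsz : s z = 0
  · simp [hsz]
  · refine le_trans (totalDegree_monomial_le _ _) ?_
    have hle : Finsupp.single z 1 ≤ s := by
      rw [Finsupp.single_le_iff]; omega
    have hadd : s - Finsupp.single z 1 + Finsupp.single z 1 = s :=
      tsub_add_cancel_of_le hle
    have hsum : (s - Finsupp.single z 1).sum (fun _ => id) + 1 = s.sum (fun _ => id) := by
      conv_rhs => rw [← hadd]
      rw [Finsupp.sum_add_index' (fun _ => rfl) (fun _ _ _ => rfl)]
      simp
    have hds : s.sum (fun _ => id) ≤ d + 1 := le_trans (le_totalDegree hs) hf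
    omega

lemma pd_zero (f : MvPolynomial (Fin n) ℂ) (hf : f.totalDegree = 0) :
    pderiv z f = 0 := by
  rw [f.as_sum, map_sum]
  apply Finset.sum_eq_zero
  intro s hs
  have hsz : s z = 0 := (MvPolynomial.totalDegree_eq_zero_iff (Fin n) f).mp hf s hs z
  rw [pderiv_monomial]
  simp [hsz]

lemma nilpot (m : ℕ) (f : MvPolynomial (Fin n) ℂ) (hf : f.totalDegree < m) :
    ((pderiv z).toLinearMap ^ m) f = 0 := by
  induction m generalizing f with
  | zero => omega
  | succ m ih =>
    rw [pow_succ, Module.End.mul_apply]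
    cases Nat.eq_zero_or_pos m with
    | inl h0 =>
      subst h0
      have : f.totalDegree = 0 := by omega
      simp [pd_zero z f this]
    | inr hpos =>
      apply ih
      show (pderiv z f).totalDegree < m
      have : (pderiv z f).totalDegree ≤ m - 1 := by
        apply pd_deg z f (m-1); omega
      omega

lemma pd_deg' (f : MvPolynomial (Fin n) ℂ) :
    ((pderiv z).toLinearMap f).totalDegree ≤ f.totalDegree := by
  show (pderiv z f).totalDegree ≤ f.totalDegree
  exact pd_deg z f f.totalDegree (by omega)

lemma pow_comm_apply (m : ℕ) (w : MvPolynomial (Fin n) ℂ) :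
    ((pderiv z).toLinearMap ^ m) ((pderiv z).toLinearMap w)
      = ((pderiv z).toLinearMap ^ (m+1)) w := by
  conv_rhs => rw [pow_succ, Module.End.mul_apply]

lemma pow_mul_X_ne {i : Fin n} (hi : i ≠ z) (m : ℕ) (w : MvPolynomial (Fin n) ℂ) :
    ((pderiv z).toLinearMap ^ m) (X i * w) = X i * ((pderiv z).toLinearMap ^ m) w := by
  induction m generalizing w with
  | zero => simp
  | succ m ih =>
    rw [pow_succ, Module.End.mul_apply, Module.End.mul_apply]
    have h1 : (pderiv z).toLinearMap (X i * w) = X i * (pderiv z).toLinearMap w := by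
      show pderiv z (X i * w) = X i * pderiv z w
      rw [pderiv_mul, pderiv_X_of_ne hi]
      ring
    rw [h1, ih]

lemma pow_mul_X_self (m : ℕ) (w : MvPolynomial (Fin n) ℂ) :
    ((pderiv z).toLinearMap ^ (m + 1)) (X z * w) =
      X z * ((pderiv z).toLinearMap ^ (m + 1)) w +
        ((m : ℂ) + 1) • ((pderiv z).toLinearMap ^ m) w := by
  induction m generalizing w with
  | zero =>
    simp only [zero_add, pow_one, pow_zero, Module.End.one_apply, Nat.cast_zero, one_smul]
    show pderiv z (X z * w) = X z * pderiv z w + w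
    rw [pderiv_mul, pderiv_X_self]; ring
  | succ m ih =>
    have e1 : ((pderiv z).toLinearMap ^ (m + 2)) (X z * w)
        = ((pderiv z).toLinearMap ^ (m+1)) ((pderiv z).toLinearMap (X z * w)) := by
      rw [pow_succ, Module.End.mul_apply]
    have e2 : (pderiv z).toLinearMap (X z * w)
        = X z * (pderiv z).toLinearMap w + w := by
      show pderiv z (X z * w) = X z * pderiv z w + w
      rw [pderiv_mul, pderiv_X_self]; ring
    rw [e1, e2, map_add, ih ((pderiv z).toLinearMap w)]
    rw [pow_comm_apply z (m+1) w, pow_comm_apply z m w]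
    push_cast
    module

end JTaux

lemma genBinom_zero (α : ℂ) : genBinom α 0 = 1 := by simp [genBinom]

lemma genBinom_prod_succ (α : ℂ) (m : ℕ) :
    ∏ i ∈ range (m+1), (α - (i:ℂ)) = α * ∏ i ∈ range m, ((α - 1) - (i:ℂ)) := by
  rw [Finset.prod_range_succ']
  simp only [Nat.cast_zero, sub_zero, Nat.cast_add, Nat.cast_one]
  rw [mul_comm]
  congr 1
  apply Finset.prod_congr rfl
  intro i _
  ring

lemma genBinom_pascal (α : ℂ) (m : ℕ) :
    genBinom α (m+1) = genBinom (α-1) (m+1) + genBinom (α-1) m := by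
  unfold genBinom
  rw [genBinom_prod_succ, Finset.prod_range_succ]
  have hf : ((m+1).factorial : ℂ) = ((m:ℂ)+1) * (m.factorial : ℂ) := by
    rw [Nat.factorial_succ]; push_cast; ring
  have h1 : (m.factorial : ℂ) ≠ 0 := by
    exact_mod_cast Nat.factorial_ne_zero m
  have h2 : ((m:ℂ)+1) ≠ 0 := by
    exact_mod_cast Nat.cast_add_one_ne_zero (R := ℂ) m
  rw [hf]
  field_simp
  ring

lemma genBinom_succ_mul (α : ℂ) (m : ℕ) :
    ((m:ℂ)+1) * genBinom α (m+1) = α * genBinom (α-1) m := by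
  unfold genBinom
  rw [genBinom_prod_succ]
  have hf : ((m+1).factorial : ℂ) = ((m:ℂ)+1) * (m.factorial : ℂ) := by
    rw [Nat.factorial_succ]; push_cast; ring
  have h1 : (m.factorial : ℂ) ≠ 0 := by
    exact_mod_cast Nat.factorial_ne_zero m
  have h2 : ((m:ℂ)+1) ≠ 0 := by
    exact_mod_cast Nat.cast_add_one_ne_zero (R := ℂ) m
  rw [hf]
  field_simp

section Main

variable {n : ℕ} (z : Fin n) (h r : ℂ)
variable (g : Module.End ℂ (MvPolynomial (Fin n) ℂ))
variable (hg : ∀ (f : MvPolynomial (Fin n) ℂ) (N : ℕ), f.totalDegree < N →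
      g f = ∑ m ∈ Finset.range N,
        (genBinom (-1 / r) m * (Complex.I * h * r) ^ m) •
          (((MvPolynomial.pderiv z).toLinearMap ^ m) f))

include hg

lemma g_mul_X {i : Fin n} (hi : i ≠ z) (w : MvPolynomial (Fin n) ℂ) :
    g (X i * w) = X i * g w := by
  have hN : (X i * w).totalDegree < w.totalDegree + 2 := by
    refine lt_of_le_of_lt (totalDegree_mul _ _) ?_
    rw [totalDegree_X]; omega
  rw [hg (X i * w) (w.totalDegree+2) hN, hg w (w.totalDegree+2) (by omega), Finset.mul_sum]
  apply Finset.sum_congr rfl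
  intro m _
  rw [JTaux.pow_mul_X_ne z hi m w]
  exact (mul_smul_comm _ _ _).symm

lemma g_comm_D (w : MvPolynomial (Fin n) ℂ) :
    g ((pderiv z).toLinearMap w) = (pderiv z).toLinearMap (g w) := by
  have hdw : ((pderiv z).toLinearMap w).totalDegree < w.totalDegree + 1 :=
    lt_of_le_of_lt (JTaux.pd_deg' z w) (by omega)
  rw [hg _ (w.totalDegree+1) hdw, hg w (w.totalDegree+1) (by omega), map_sum]
  apply Finset.sum_congr rfl
  intro m _
  rw [LinearMap.map_smul]
  congr 1
  rw [JTaux.pow_comm_apply]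
  conv_rhs => rw [← Module.End.mul_apply, ← pow_succ']

lemma g_mul_X_z (hr : r ≠ 0) (f : MvPolynomial (Fin n) ℂ) :
    g (X z * (f + (Complex.I*h*r) • (pderiv z).toLinearMap f))
      = X z * (g f + (Complex.I*h*r) • g ((pderiv z).toLinearMap f))
        - (Complex.I*h) • g f := by
  set c : ℂ := Complex.I*h*r with hc
  set α : ℂ := -1/r with hα
  set D : Module.End ℂ (MvPolynomial (Fin n) ℂ) := (pderiv z).toLinearMap with hD
  set d := f.totalDegree with hd
  set u : MvPolynomial (Fin n) ℂ := f + c • D f with hu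
  have hDf : (D f).totalDegree ≤ d := JTaux.pd_deg' z f
  have hud : u.totalDegree ≤ d := by
    refine le_trans (totalDegree_add _ _) (max_le (le_refl d) ?_)
    exact le_trans (totalDegree_smul_le _ _) hDf
  have hXu : (X z * u).totalDegree < d + 3 := by
    refine lt_of_le_of_lt (totalDegree_mul _ _) ?_
    rw [totalDegree_X]; omega
  -- expand g (X z * u)
  rw [hg (X z * u) (d+3) hXu, Finset.sum_range_succ']
  -- rewrite each term with the commutation rule
  have hterm : ∀ k, (genBinom α (k+1) * c^(k+1)) • ((D ^ (k+1)) (X z * u))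
      = (genBinom α (k+1) * c^(k+1)) • (X z * (D ^ (k+1)) u)
        + ((genBinom α (k+1) * c^(k+1)) * ((k:ℂ)+1)) • ((D ^ k) u) := by
    intro k
    rw [JTaux.pow_mul_X_self z k u, smul_add, smul_smul]
  rw [Finset.sum_congr rfl (fun k _ => hterm k), Finset.sum_add_distrib]
  rw [add_right_comm]
  -- first part recombines to X z * g u
  have hS1 : (∑ k ∈ range (d+2), (genBinom α (k+1) * c^(k+1)) • (X z * (D ^ (k+1)) u))
      + (genBinom α 0 * c^0) • ((D ^ 0) (X z * u)) = X z * g u := by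
    rw [hg u (d+3) (by omega), Finset.mul_sum]
    conv_rhs => rw [Finset.sum_range_succ'
      (fun m => X z * ((genBinom α m * c^m) • ((D ^ m) u))) (d+2)]
    congr 1
    · apply Finset.sum_congr rfl
      intro k _
      exact (mul_smul_comm _ _ _).symm
    · simp only [pow_zero, Module.End.one_apply, genBinom_zero, one_mul, one_smul]
  -- the scalar identity
  have hscal : ∀ k : ℕ, (genBinom α (k+1) * c^(k+1)) * ((k:ℂ)+1)
      = (-(Complex.I*h)) * (genBinom (α-1) k * c^k) := by
    intro k
    have := genBinom_succ_mul α k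
    have hac : α * c = -(Complex.I*h) := by
      rw [hα, hc]; field_simp
    calc (genBinom α (k+1) * c^(k+1)) * ((k:ℂ)+1)
        = (((k:ℂ)+1) * genBinom α (k+1)) * c^(k+1) := by ring
      _ = (α * genBinom (α-1) k) * c^(k+1) := by rw [this]
      _ = (α * c) * (genBinom (α-1) k * c^k) := by rw [pow_succ]; ring
      _ = (-(Complex.I*h)) * (genBinom (α-1) k * c^k) := by rw [hac]
  -- second part
  have hS2 : (∑ k ∈ range (d+2), ((genBinom α (k+1) * c^(k+1)) * ((k:ℂ)+1)) • ((D ^ k) u))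
      = (-(Complex.I*h)) • ∑ k ∈ range (d+2), (genBinom (α-1) k * c^k) • ((D ^ k) u) := by
    rw [Finset.smul_sum]
    apply Finset.sum_congr rfl
    intro k _
    rw [hscal k, smul_smul]
  -- claim C : the primed series on u equals g f
  have hDku : ∀ k : ℕ, (D ^ k) u = (D ^ k) f + c • (D ^ (k+1)) f := by
    intro k
    rw [hu, map_add, LinearMap.map_smul, JTaux.pow_comm_apply z k f]
  have hC : (∑ k ∈ range (d+2), (genBinom (α-1) k * c^k) • ((D ^ k) u)) = g f := by
    have expand : ∀ k, (genBinom (α-1) k * c^k) • ((D ^ k) u)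
        = (genBinom (α-1) k * c^k) • ((D ^ k) f)
          + ((genBinom (α-1) k * c^k) * c) • ((D ^ (k+1)) f) := by
      intro k
      rw [hDku k, smul_add, smul_smul]
    calc (∑ k ∈ range (d+2), (genBinom (α-1) k * c^k) • ((D ^ k) u))
        = (∑ k ∈ range (d+2), (genBinom (α-1) k * c^k) • ((D ^ k) f))
          + (∑ k ∈ range (d+2), ((genBinom (α-1) k * c^k) * c) • ((D ^ (k+1)) f)) := by
          rw [Finset.sum_congr rfl (fun k _ => expand k), Finset.sum_add_distrib]
      _ = (∑ m ∈ range (d+3), (genBinom (α-1) m * c^m) • ((D ^ m) f))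
          + (∑ k ∈ range (d+2), ((genBinom (α-1) k * c^k) * c) • ((D ^ (k+1)) f)) := by
          congr 1
          conv_rhs => rw [Finset.sum_range_succ]
          rw [JTaux.nilpot z (d+2) f (by omega), smul_zero, add_zero]
      _ = ((∑ k ∈ range (d+2), (genBinom (α-1) (k+1) * c^(k+1)) • ((D ^ (k+1)) f))
            + (genBinom (α-1) 0 * c^0) • ((D ^ 0) f))
          + (∑ k ∈ range (d+2), ((genBinom (α-1) k * c^k) * c) • ((D ^ (k+1)) f)) := by
          congr 1
          exact Finset.sum_range_succ'
            (fun m => (genBinom (α-1) m * c^m) • ((D ^ m) f)) (d+2)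
      _ = (∑ k ∈ range (d+2), ((genBinom (α-1) (k+1) * c^(k+1)) • ((D ^ (k+1)) f)
            + ((genBinom (α-1) k * c^k) * c) • ((D ^ (k+1)) f)))
          + (genBinom (α-1) 0 * c^0) • ((D ^ 0) f) := by
          rw [Finset.sum_add_distrib]
          rw [add_right_comm]
      _ = (∑ k ∈ range (d+2), (genBinom α (k+1) * c^(k+1)) • ((D ^ (k+1)) f))
          + (genBinom α 0 * c^0) • ((D ^ 0) f) := by
          have hzero : (genBinom (α-1) 0 * c^0) • ((D ^ 0) f)
              = (genBinom α 0 * c^0) • ((D ^ 0) f) := by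
            simp [genBinom_zero]
          rw [hzero]
          congr 1
          apply Finset.sum_congr rfl
          intro k _
          rw [← add_smul]
          congr 1
          rw [genBinom_pascal α k, add_mul, pow_succ]
          ring
      _ = ∑ m ∈ range (d+3), (genBinom α m * c^m) • ((D ^ m) f) :=
          (Finset.sum_range_succ' (fun m => (genBinom α m * c^m) • ((D ^ m) f)) (d+2)).symm
      _ = g f := (hg f (d+3) (by omega)).symm
  rw [hS1, hS2, hC]
  -- finish: X z * g u + (-(I h)) • g f = X z * (g f + c • g (D f)) - (I h) • g f
  have hgu : g u = g f + c • g (D f) := by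
    rw [hu, map_add, LinearMap.map_smul]
  rw [hgu]
  rw [neg_smul, ← sub_eq_add_neg]

end Main


/-- Fix `n ≥ 2`, `h ∈ ℂ` and `r ∈ ℂ`, `r ≠ 0`. Let
`X̂⁰ = M₀ ∘ (id + i·h·r·∂₀)` (realizing `x⁰(1 − hrP₀)`) and `X̂ⁱ = M_i ∘ g_r`, where `g_r`
is the binomial series operator `Σ_m binom(−1/r, m)·(ihr)^m·∂₀^m` realizing
`(1 − hrP₀)^{−1/r}` (well defined since `∂₀` is locally nilpotent on polynomials:
on each polynomial `f` the series equals any partial sum past `totalDegree f`).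
Then the κ-Minkowski relations hold: `[X̂⁰, X̂ⁱ] = i·h·X̂ⁱ` and `[X̂ⁱ, X̂ʲ] = 0`. -/
theorem jordanian_twist_kappaMinkowski (n : ℕ) (hn : 2 ≤ n) (h r : ℂ) (hr : r ≠ 0)
    (z : Fin n) (hz : (z : ℕ) = 0)
    (g : Module.End ℂ (MvPolynomial (Fin n) ℂ))
    (hg : ∀ (f : MvPolynomial (Fin n) ℂ) (N : ℕ), f.totalDegree < N →
      g f = ∑ m ∈ Finset.range N,
        (genBinom (-1 / r) m * (Complex.I * h * r) ^ m) •
          (((MvPolynomial.pderiv z).toLinearMap ^ m) f)) :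
    (∀ i : Fin n, i ≠ z →
      (Mop z ∘ₗ (LinearMap.id + (Complex.I * h * r) • (MvPolynomial.pderiv z).toLinearMap))
          ∘ₗ (Mop i ∘ₗ g) -
        (Mop i ∘ₗ g) ∘ₗ
          (Mop z ∘ₗ (LinearMap.id + (Complex.I * h * r) • (MvPolynomial.pderiv z).toLinearMap))
        = (Complex.I * h) • (Mop i ∘ₗ g)) ∧
    (∀ i j : Fin n, i ≠ z → j ≠ z →
      (Mop i ∘ₗ g) ∘ₗ (Mop j ∘ₗ g) - (Mop j ∘ₗ g) ∘ₗ (Mop i ∘ₗ g) = 0) := by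
  constructor
  · intro i hi
    apply LinearMap.ext
    intro f
    simp only [LinearMap.sub_apply, LinearMap.comp_apply, LinearMap.add_apply,
      LinearMap.id_apply, LinearMap.smul_apply, Mop, LinearMap.mulLeft_apply]
    have h1 : (pderiv z).toLinearMap (X i * g f) = X i * (pderiv z).toLinearMap (g f) := by
      show pderiv z (X i * g f) = X i * pderiv z (g f)
      rw [pderiv_mul, pderiv_X_of_ne hi]
      ring
    rw [h1, ← g_comm_D z h r g hg f, g_mul_X_z z h r g hg hr f]
    simp only [smul_eq_C_mul]
    ring
  · intro i j hi hj
    apply LinearMap.ext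
    intro f
    simp only [LinearMap.sub_apply, LinearMap.comp_apply, LinearMap.zero_apply, Mop,
      LinearMap.mulLeft_apply]
    rw [g_mul_X z h r g hg hj (g f), g_mul_X z h r g hg hi (g f)]
    ring
end
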